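/- arXiv:1010.3570 — 8 statements merged into one kernel-verified Lean document; each statement's English description precedes it below -/
import Mathlib

section
/- The average entropy of the arcsine distribution equals ln 2 − 1; that is, ∫₀² (−x ln x) · 1/(π√(x(2-x))) dx = ln 2 − 1. -/
open Real MeasureTheory Set intervalIntegral


lemma log_sin_bound {x : ℝ} (hx : 0 < x) (hx' : x ≤ π / 2) :
    ‖Real.log (Real.sin x)‖ ≤ 2 * x ^ (-(1:ℝ)/2) + 1 := by
  have hs0 : 0 < Real.sin x := Real.sin_pos_of_pos_of_lt_pi hx (lt_of_le_of_lt hx' (by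
    have := Real.pi_pos; linarith))
  have hs1 : Real.sin x ≤ 1 := Real.sin_le_one x
  have hlogle : Real.log (Real.sin x) ≤ 0 := Real.log_nonpos hs0.le hs1
  rw [Real.norm_eq_abs, abs_of_nonpos hlogle]
  have hjordan : 2 / π * x ≤ Real.sin x := Real.mul_le_sin hx.le hx'
  have h1 : Real.log (2 / π * x) ≤ Real.log (Real.sin x) :=
    Real.log_le_log (by positivity) hjordan
  have h2 : Real.log (2 / π * x) = Real.log 2 - Real.log π + Real.log x := by
    rw [Real.log_mul (by positivity) hx.ne', Real.log_div (by norm_num) Real.pi_ne_zero]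
  -- -log x ≤ 2 * x^(-1/2)
  have h3 : -Real.log x ≤ 2 * x ^ (-(1:ℝ)/2) := by
    have hy : (0:ℝ) < x ^ (-(1:ℝ)/2) := Real.rpow_pos_of_pos hx _
    have := Real.log_le_sub_one_of_pos hy
    have hlog : Real.log (x ^ (-(1:ℝ)/2)) = (-(1:ℝ)/2) * Real.log x := Real.log_rpow hx _
    nlinarith [Real.log_le_sub_one_of_pos hy]
  have hπ : Real.log π - Real.log 2 ≤ 1 := by
    have h := Real.log_le_sub_one_of_pos (by positivity : (0:ℝ) < π / 2)
    rw [Real.log_div Real.pi_ne_zero (by norm_num)] at h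
    have := Real.pi_lt_d2
    linarith
  linarith

lemma il_log_sin : IntervalIntegrable (fun x => Real.log (Real.sin x)) volume 0 (π / 2) := by
  have hg : IntervalIntegrable (fun x : ℝ => 2 * x ^ (-(1:ℝ)/2) + 1) volume 0 (π / 2) :=
    ((intervalIntegrable_rpow' (by norm_num)).const_mul 2).add intervalIntegrable_const
  refine hg.mono_fun' ?_ ?_
  · exact ((Real.measurable_log.comp Real.continuous_sin.measurable).aestronglyMeasurable)
  · rw [Filter.EventuallyLE, ae_restrict_iff' measurableSet_uIoc]
    refine Filter.Eventually.of_forall (fun x hx => ?_)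
    rw [uIoc_of_le (by positivity : (0:ℝ) ≤ π / 2)] at hx
    exact log_sin_bound hx.1 hx.2

lemma log_sin_pi_sub : (fun x : ℝ => Real.log (Real.sin (π - x))) = fun x => Real.log (Real.sin x) := by
  funext x; rw [Real.sin_pi_sub]

lemma il_log_sin_pi2_pi : IntervalIntegrable (fun x => Real.log (Real.sin x)) volume (π / 2) π := by
  have h := il_log_sin.comp_sub_left π
  rw [log_sin_pi_sub, sub_zero] at h
  have : π - π / 2 = π / 2 := by ring
  rw [this] at h
  exact h.symm

lemma il_log_sin_pi : IntervalIntegrable (fun x => Real.log (Real.sin x)) volume 0 π :=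
  il_log_sin.trans il_log_sin_pi2_pi

lemma il_log_cos : IntervalIntegrable (fun x => Real.log (Real.cos x)) volume 0 (π / 2) := by
  have h := il_log_sin.comp_sub_left (π / 2)
  have he : (fun x : ℝ => Real.log (Real.sin (π / 2 - x))) = fun x => Real.log (Real.cos x) := by
    funext x; rw [Real.sin_pi_div_two_sub]
  rw [he, sub_zero, sub_self] at h
  exact h.symm

lemma integral_log_sin_halves :
    ∫ x in (π/2)..π, Real.log (Real.sin x) = ∫ x in (0:ℝ)..(π/2), Real.log (Real.sin x) := by
  have h := intervalIntegral.integral_comp_sub_left (a := 0) (b := π/2)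
    (fun x => Real.log (Real.sin x)) π
  rw [sub_zero] at h
  have h2 : π - π / 2 = π / 2 := by ring
  rw [h2] at h
  rw [← h]
  congr 1
  exact log_sin_pi_sub

lemma integral_log_sin_pi_eq :
    ∫ x in (0:ℝ)..π, Real.log (Real.sin x) = 2 * ∫ x in (0:ℝ)..(π/2), Real.log (Real.sin x) := by
  rw [← intervalIntegral.integral_add_adjacent_intervals il_log_sin il_log_sin_pi2_pi,
    integral_log_sin_halves]
  ring

lemma integral_log_cos_eq :
    ∫ x in (0:ℝ)..(π/2), Real.log (Real.cos x) = ∫ x in (0:ℝ)..(π/2), Real.log (Real.sin x) := by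
  have h := intervalIntegral.integral_comp_sub_left (a := 0) (b := π/2)
    (fun x => Real.log (Real.sin x)) (π/2)
  rw [sub_zero, sub_self] at h
  rw [← h]
  refine intervalIntegral.integral_congr (fun x _ => ?_)
  simp [Real.sin_pi_div_two_sub]

lemma integral_log_sin_pi_div_two :
    ∫ x in (0:ℝ)..(π/2), Real.log (Real.sin x) = -(π/2) * Real.log 2 := by
  set I := ∫ x in (0:ℝ)..(π/2), Real.log (Real.sin x) with hI
  have h2x : ∫ x in (0:ℝ)..(π/2), Real.log (Real.sin (2*x)) = I := by
    rw [intervalIntegral.integral_comp_mul_left (fun x => Real.log (Real.sin x)) (by norm_num : (2:ℝ) ≠ 0)]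
    rw [mul_zero, (by ring : (2:ℝ)*(π/2) = π), integral_log_sin_pi_eq, smul_eq_mul]
    ring
  have hsplit : ∫ x in (0:ℝ)..(π/2), Real.log (Real.sin (2*x))
      = ∫ x in (0:ℝ)..(π/2), (Real.log 2 + Real.log (Real.sin x) + Real.log (Real.cos x)) := by
    refine intervalIntegral.integral_congr_ae ?_
    have h1 : ∀ᵐ x : ℝ, x ≠ π / 2 := by
      refine ae_iff.2 ?_
      simp only [ne_eq, not_not]
      simp [Set.setOf_eq_eq_singleton]
    filter_upwards [h1] with x hne hx
    rw [Set.uIoc_of_le (by positivity : (0:ℝ) ≤ π/2)] at hx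
    have hx2 : x < π / 2 := lt_of_le_of_ne hx.2 hne
    have hs : 0 < Real.sin x := Real.sin_pos_of_pos_of_lt_pi hx.1 (by linarith [Real.pi_pos])
    have hc : 0 < Real.cos x := Real.cos_pos_of_mem_Ioo ⟨by linarith [Real.pi_pos, hx.1], hx2⟩
    rw [Real.sin_two_mul, Real.log_mul (by positivity) hc.ne', Real.log_mul (by norm_num) hs.ne']
  have hadd : ∫ x in (0:ℝ)..(π/2), (Real.log 2 + Real.log (Real.sin x) + Real.log (Real.cos x))
      = (π/2) * Real.log 2 + I + I := by
    rw [intervalIntegral.integral_add (intervalIntegrable_const.add il_log_sin) il_log_cos,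
      intervalIntegral.integral_add intervalIntegrable_const il_log_sin,
      intervalIntegral.integral_const, integral_log_cos_eq]
    simp only [smul_eq_mul, sub_zero]
    rw [hI]
  have : I = (π/2) * Real.log 2 + I + I := by rw [← hadd, ← hsplit, h2x]
  linarith

lemma il_log_sin_half : IntervalIntegrable (fun θ => Real.log (Real.sin (θ / 2))) volume 0 π := by
  have h := il_log_sin.comp_mul_right (c := 1/2)
  have e : (fun x : ℝ => Real.log (Real.sin (x * (1/2)))) = fun θ => Real.log (Real.sin (θ / 2)) := by
    funext x; rw [mul_one_div]
  have e0 : (0:ℝ) / (1/2) = 0 := by norm_num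
  have e1 : (π/2) / (1/2) = π := by ring
  rw [e, e0, e1] at h
  exact h

lemma integral_log_sin_half :
    ∫ θ in (0:ℝ)..π, Real.log (Real.sin (θ / 2)) = -π * Real.log 2 := by
  rw [intervalIntegral.integral_comp_div (fun x => Real.log (Real.sin x)) (by norm_num : (2:ℝ) ≠ 0)]
  norm_num
  rw [integral_log_sin_pi_div_two]
  ring

lemma il_cos_log_sin_half :
    IntervalIntegrable (fun θ => Real.cos θ * Real.log (Real.sin (θ / 2))) volume 0 π := by
  have := il_log_sin_half.continuousOn_mul (Real.continuous_cos.continuousOn)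
  simpa [mul_comm] using this

lemma integral_cos_log_sin_half :
    ∫ θ in (0:ℝ)..π, Real.cos θ * Real.log (Real.sin (θ / 2)) = -(π / 2) := by
  have hderiv : ∀ θ ∈ Ioo (0:ℝ) π,
      HasDerivAt (fun θ => Real.sin θ * Real.log (Real.sin (θ / 2)) - (θ + Real.sin θ) / 2)
        (Real.cos θ * Real.log (Real.sin (θ / 2))) θ := by
    intro θ hθ
    have hs : 0 < Real.sin (θ / 2) :=
      Real.sin_pos_of_pos_of_lt_pi (by linarith [hθ.1]) (by linarith [hθ.2, Real.pi_pos])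
    have h1 : HasDerivAt (fun θ : ℝ => θ / 2) (1 / 2) θ := by
      simpa using (hasDerivAt_id θ).div_const 2
    have h2 : HasDerivAt (fun θ : ℝ => Real.log (Real.sin (θ / 2)))
        (Real.cos (θ / 2) / Real.sin (θ / 2) * (1 / 2)) θ := by
      have := ((Real.hasDerivAt_sin (θ/2)).comp θ h1).log (f := Real.sin ∘ fun θ : ℝ => θ / 2) hs.ne'
      simpa [mul_comm, mul_div_assoc] using this
    have h3 : HasDerivAt (fun θ : ℝ => Real.sin θ * Real.log (Real.sin (θ / 2)))
        (Real.cos θ * Real.log (Real.sin (θ / 2))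
          + Real.sin θ * (Real.cos (θ / 2) / Real.sin (θ / 2) * (1 / 2))) θ :=
      (Real.hasDerivAt_sin θ).mul h2
    have h4 : HasDerivAt (fun θ : ℝ => (θ + Real.sin θ) / 2) ((1 + Real.cos θ) / 2) θ :=
      ((hasDerivAt_id θ).add (Real.hasDerivAt_sin θ)).div_const 2
    have h5 := h3.sub h4
    convert h5 using 1 <;> try rfl
    have h2θ : 2 * (θ / 2) = θ := by ring
    have hsin : Real.sin θ = 2 * Real.sin (θ / 2) * Real.cos (θ / 2) := by
      rw [← Real.sin_two_mul, h2θ]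
    have hcos : Real.cos θ = 2 * Real.cos (θ / 2) ^ 2 - 1 := by
      rw [← Real.cos_two_mul, h2θ]
    rw [hsin, hcos]
    field_simp
    ring
  have key : Filter.Tendsto (fun θ : ℝ => Real.log (Real.sin (θ / 2)) * Real.sin (θ / 2))
      (nhdsWithin 0 (Ioi 0)) (nhds 0) := by
    have h := (continuous_mul_log.comp (Real.continuous_sin.comp (continuous_id.div_const 2))).tendsto 0
    simp only [Function.comp_def] at h
    norm_num at h
    have h2 := h.mono_left (nhdsWithin_le_nhds (s := Ioi (0:ℝ)))
    refine h2.congr (fun θ => ?_)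
    ring
  have hcosl : Filter.Tendsto (fun θ : ℝ => 2 * Real.cos (θ / 2)) (nhdsWithin 0 (Ioi 0))
      (nhds 2) := by
    have h := ((Real.continuous_cos.comp (continuous_id.div_const 2)).const_smul (2:ℝ)).tendsto 0
    norm_num at h
    exact h.mono_left nhdsWithin_le_nhds
  have hrest : Filter.Tendsto (fun θ : ℝ => (θ + Real.sin θ) / 2) (nhdsWithin 0 (Ioi 0))
      (nhds 0) := by
    have h := ((continuous_id.add Real.continuous_sin).div_const 2).tendsto 0
    norm_num at h
    exact h.mono_left nhdsWithin_le_nhds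
  have htend0 : Filter.Tendsto
      (fun θ => Real.sin θ * Real.log (Real.sin (θ / 2)) - (θ + Real.sin θ) / 2)
      (nhdsWithin 0 (Ioi 0)) (nhds 0) := by
    have h := (hcosl.mul key).sub hrest
    norm_num at h
    refine h.congr (fun θ => ?_)
    have h2θ : 2 * (θ / 2) = θ := by ring
    have hsin : Real.sin θ = 2 * Real.sin (θ / 2) * Real.cos (θ / 2) := by
      rw [← Real.sin_two_mul, h2θ]
    rw [hsin]; ring
  have htendpi : Filter.Tendsto
      (fun θ => Real.sin θ * Real.log (Real.sin (θ / 2)) - (θ + Real.sin θ) / 2)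
      (nhdsWithin π (Iio π)) (nhds (-(π / 2))) := by
    have h1 : ContinuousAt (fun θ : ℝ => Real.log (Real.sin (θ / 2))) π := by
      apply ContinuousAt.comp (Real.continuousAt_log ?_)
        ((Real.continuous_sin.comp (continuous_id.div_const 2)).continuousAt)
      · simp
    have hc : ContinuousAt
        (fun θ => Real.sin θ * Real.log (Real.sin (θ / 2)) - (θ + Real.sin θ) / 2) π :=
      (Real.continuous_sin.continuousAt.mul h1).sub
        ((continuous_id.add Real.continuous_sin).continuousAt.div_const 2)
    have h := hc.tendsto.mono_left (nhdsWithin_le_nhds (s := Iio π))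
    have hval : Real.sin π * Real.log (Real.sin (π / 2)) - (π + Real.sin π) / 2 = -(π / 2) := by
      simp
    rw [hval] at h
    exact h
  have := intervalIntegral.integral_eq_sub_of_hasDerivAt_of_tendsto Real.pi_pos hderiv
    il_cos_log_sin_half htend0 htendpi
  rw [this]
  ring

lemma one_sub_cos_eq (θ : ℝ) : 1 - Real.cos θ = 2 * Real.sin (θ / 2) ^ 2 := by
  have h2θ : 2 * (θ / 2) = θ := by ring
  have hc : Real.cos θ = 2 * Real.cos (θ / 2) ^ 2 - 1 := by
    rw [← Real.cos_two_mul, h2θ]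
  have hp := Real.sin_sq_add_cos_sq (θ / 2)
  nlinarith

lemma integral_K :
    ∫ θ in (0:ℝ)..π, (1 - Real.cos θ) * Real.log (1 - Real.cos θ) = π - π * Real.log 2 := by
  have hsplit : ∫ θ in (0:ℝ)..π, (1 - Real.cos θ) * Real.log (1 - Real.cos θ)
      = ∫ θ in (0:ℝ)..π, ((1 - Real.cos θ) * Real.log 2
          + 2 * (Real.log (Real.sin (θ / 2)) - Real.cos θ * Real.log (Real.sin (θ / 2)))) := by
    refine intervalIntegral.integral_congr (fun θ hθ => ?_)
    rw [uIcc_of_le Real.pi_pos.le] at hθ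
    rcases eq_or_lt_of_le hθ.1 with h0 | h0
    · simp [← h0]
    · have hs : 0 < Real.sin (θ / 2) :=
        Real.sin_pos_of_pos_of_lt_pi (by linarith) (by linarith [hθ.2, Real.pi_pos])
      have hcos : Real.cos θ = 1 - 2 * Real.sin (θ / 2) ^ 2 := by
        linarith [one_sub_cos_eq θ]
      rw [one_sub_cos_eq θ, Real.log_mul (by norm_num) (by positivity), Real.log_pow, hcos]
      push_cast
      ring
  rw [hsplit]
  have h1c : IntervalIntegrable (fun θ => (1 - Real.cos θ) * Real.log 2) volume 0 π :=
    ((continuous_const.sub Real.continuous_cos).mul continuous_const).intervalIntegrable 0 π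
  have h2c : IntervalIntegrable
      (fun θ => 2 * (Real.log (Real.sin (θ / 2)) - Real.cos θ * Real.log (Real.sin (θ / 2))))
      volume 0 π := (il_log_sin_half.sub il_cos_log_sin_half).const_mul 2
  rw [intervalIntegral.integral_add h1c h2c,
    intervalIntegral.integral_mul_const,
    intervalIntegral.integral_const_mul,
    intervalIntegral.integral_sub il_log_sin_half il_cos_log_sin_half,
    intervalIntegral.integral_sub intervalIntegrable_const
      (Real.continuous_cos.intervalIntegrable 0 π),
    integral_cos, integral_log_sin_half, integral_cos_log_sin_half,
    intervalIntegral.integral_const]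
  simp only [smul_eq_mul, Real.sin_pi, Real.sin_zero, sub_zero, mul_one]
  ring

/-- The average entropy of the arcsine distribution equals `ln 2 - 1`. -/
theorem arcsine_mean_entropy :
    ∫ x in Set.Ioo (0:ℝ) 2,
      (-x * Real.log x) * (1 / (π * Real.sqrt (x * (2 - x)))) = Real.log 2 - 1 := by
  have himg : (fun θ => 1 - Real.cos θ) '' Ioo 0 π = Ioo (0:ℝ) 2 := by
    ext y
    constructor
    · rintro ⟨θ, hθ, rfl⟩
      have h1 : Real.cos θ < 1 := by
        have := Real.strictAntiOn_cos (left_mem_Icc.2 Real.pi_pos.le)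
          ⟨hθ.1.le, hθ.2.le⟩ hθ.1
        simpa using this
      have h2 : -1 < Real.cos θ := by
        have := Real.strictAntiOn_cos ⟨hθ.1.le, hθ.2.le⟩
          (right_mem_Icc.2 Real.pi_pos.le) hθ.2
        simpa using this
      constructor <;> simp <;> linarith
    · intro hy
      refine ⟨Real.arccos (1 - y), ⟨?_, ?_⟩, ?_⟩
      · exact Real.arccos_pos.2 (by linarith [hy.1])
      · refine lt_of_le_of_ne (Real.arccos_le_pi _) (fun h => ?_)
        have := Real.arccos_eq_pi.1 h
        linarith [hy.2]
      · show 1 - Real.cos (Real.arccos (1 - y)) = y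
        rw [Real.cos_arccos (by linarith [hy.2]) (by linarith [hy.1])]
        ring
  have hinj : InjOn (fun θ => 1 - Real.cos θ) (Ioo 0 π) := by
    intro a ha b hb h
    refine Real.injOn_cos ⟨ha.1.le, ha.2.le⟩ ⟨hb.1.le, hb.2.le⟩ ?_
    simp only at h
    linarith
  have hderiv : ∀ θ ∈ Ioo (0:ℝ) π,
      HasDerivWithinAt (fun θ => 1 - Real.cos θ) (Real.sin θ) (Ioo 0 π) θ := by
    intro θ _
    have := ((Real.hasDerivAt_cos θ).const_sub 1).hasDerivWithinAt (s := Ioo 0 π)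
    simpa using this
  rw [← himg, integral_image_eq_integral_abs_deriv_smul measurableSet_Ioo hderiv hinj]
  have hcongr : ∫ θ in Ioo (0:ℝ) π, |Real.sin θ| •
        ((-(1 - Real.cos θ) * Real.log (1 - Real.cos θ)) *
          (1 / (π * Real.sqrt ((1 - Real.cos θ) * (2 - (1 - Real.cos θ))))))
      = ∫ θ in Ioo (0:ℝ) π, -((1 - Real.cos θ) * Real.log (1 - Real.cos θ)) / π := by
    refine setIntegral_congr_fun measurableSet_Ioo (fun θ hθ => ?_)
    have hsin : 0 < Real.sin θ := Real.sin_pos_of_pos_of_lt_pi hθ.1 hθ.2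
    have hsq : (1 - Real.cos θ) * (2 - (1 - Real.cos θ)) = Real.sin θ ^ 2 := by
      have := Real.sin_sq_add_cos_sq θ
      nlinarith
    rw [hsq, Real.sqrt_sq hsin.le, abs_of_pos hsin, smul_eq_mul]
    field_simp
  rw [hcongr, ← integral_Ioc_eq_integral_Ioo,
    ← intervalIntegral.integral_of_le Real.pi_pos.le,
    intervalIntegral.integral_div]
  have : ∫ θ in (0:ℝ)..π, -((1 - Real.cos θ) * Real.log (1 - Real.cos θ))
      = -(π - π * Real.log 2) := by
    rw [intervalIntegral.integral_neg, integral_K]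
  rw [this]
  field_simp
  ring
end

section
/- For each integer k ≥ 2, the function ν_k(x) = (1/(2π)) · √(4k(k−1)x − k²x²) / (kx − x²) defined on (0, 4(k−1)/k) is a probability density, i.e., its integral over (0, 4(k−1)/k) equals 1. -/
open Real MeasureTheory Filter Set

noncomputable def Fk (K : ℝ) (x : ℝ) : ℝ :=
  (1/π) * (K * Real.arcsin (Real.sqrt (x / (4*(K-1)/K))) -
    (K-2) * Real.arctan (((K-2)/K) * Real.sqrt (x / (4*(K-1)/K - x))))

lemma nu_deriv (K : ℝ) (hK : 2 ≤ K) {x : ℝ}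
    (hx0 : 0 < x) (hxb : x < 4*(K-1)/K) :
    HasDerivAt (Fk K)
      ((1 / (2 * π)) * Real.sqrt (4 * K * (K - 1) * x - K ^ 2 * x ^ 2) / (K * x - x ^ 2)) x := by
  have hK0 : 0 < K := lt_of_lt_of_le two_pos hK
  obtain ⟨b, hbdef⟩ : ∃ b : ℝ, b = 4*(K-1)/K := ⟨_, rfl⟩
  rw [← hbdef] at hxb
  have hb0 : 0 < b := by rw [hbdef]; exact div_pos (by linarith) hK0
  have hbK : b ≤ K := by
    rw [hbdef, div_le_iff₀ hK0]; nlinarith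
  have hKb : K * b = 4 * (K - 1) := by rw [hbdef]; field_simp
  have hbx : 0 < b - x := by linarith
  have hxK : x < K := lt_of_lt_of_le hxb hbK
  have hKx : 0 < K - x := by linarith
  have hsx : Real.sqrt x ^ 2 = x := Real.sq_sqrt hx0.le
  have hsb : Real.sqrt b ^ 2 = b := Real.sq_sqrt hb0.le
  have hsbx : Real.sqrt (b - x) ^ 2 = b - x := Real.sq_sqrt hbx.le
  have hsx0 : 0 < Real.sqrt x := Real.sqrt_pos.2 hx0
  have hsb0 : 0 < Real.sqrt b := Real.sqrt_pos.2 hb0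
  have hsbx0 : 0 < Real.sqrt (b - x) := Real.sqrt_pos.2 hbx
  have e1 : Real.sqrt (x / b) = Real.sqrt x / Real.sqrt b := Real.sqrt_div hx0.le b
  have e2 : Real.sqrt (x / (b - x)) = Real.sqrt x / Real.sqrt (b - x) := Real.sqrt_div hx0.le _
  have hπ : (0:ℝ) < π := Real.pi_pos
  -- arcsin part
  have hne1 : Real.sqrt (x / b) ≠ 1 := by
    rw [e1]
    exact ne_of_lt (by rw [div_lt_one hsb0]; exact Real.sqrt_lt_sqrt hx0.le hxb)
  have hne1' : Real.sqrt (x / b) ≠ -1 := by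
    intro h; have := Real.sqrt_nonneg (x / b); rw [h] at this; linarith
  have hA1 : HasDerivAt (fun y : ℝ => y / b) (1 / b) x := by
    simpa using (hasDerivAt_id x).div_const b
  have hA2 : HasDerivAt (fun y : ℝ => Real.sqrt (y / b)) (1 / b / (2 * Real.sqrt (x / b))) x :=
    hA1.sqrt (by positivity)
  have hA : HasDerivAt (fun y : ℝ => Real.arcsin (Real.sqrt (y / b)))
      (1 / Real.sqrt (1 - Real.sqrt (x / b) ^ 2) * (1 / b / (2 * Real.sqrt (x / b)))) x :=
    by have h := (Real.hasDerivAt_arcsin hne1' hne1).comp x hA2; exact h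
  have eA : 1 / Real.sqrt (1 - Real.sqrt (x / b) ^ 2) * (1 / b / (2 * Real.sqrt (x / b)))
      = 1 / (2 * Real.sqrt x * Real.sqrt (b - x)) := by
    rw [Real.sq_sqrt (by positivity : (0:ℝ) ≤ x / b),
      show (1 : ℝ) - x / b = (b - x) / b by field_simp,
      Real.sqrt_div hbx.le, e1]
    field_simp
    try ring_nf
    try exact hsb
  rw [eA] at hA
  -- arctan part
  have hB1 : HasDerivAt (fun y : ℝ => y / (b - y))
      ((1 * (b - x) - x * (0 - 1)) / (b - x) ^ 2) x :=
    (hasDerivAt_id x).div ((hasDerivAt_const x b).sub (hasDerivAt_id x)) (ne_of_gt hbx)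
  have hB2 : HasDerivAt (fun y : ℝ => Real.sqrt (y / (b - y)))
      ((1 * (b - x) - x * (0 - 1)) / (b - x) ^ 2 / (2 * Real.sqrt (x / (b - x)))) x :=
    hB1.sqrt (by positivity)
  have hB3 : HasDerivAt (fun y : ℝ => (K-2)/K * Real.sqrt (y / (b - y)))
      ((K-2)/K * ((1 * (b - x) - x * (0 - 1)) / (b - x) ^ 2 / (2 * Real.sqrt (x / (b - x))))) x :=
    hB2.const_mul _
  have hB : HasDerivAt (fun y : ℝ => Real.arctan ((K-2)/K * Real.sqrt (y / (b - y))))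
      (1 / (1 + ((K-2)/K * Real.sqrt (x / (b - x))) ^ 2) *
        ((K-2)/K * ((1 * (b - x) - x * (0 - 1)) / (b - x) ^ 2 / (2 * Real.sqrt (x / (b - x)))))) x
      := hB3.arctan
  have eB : 1 / (1 + ((K-2)/K * Real.sqrt (x / (b - x))) ^ 2) *
        ((K-2)/K * ((1 * (b - x) - x * (0 - 1)) / (b - x) ^ 2 / (2 * Real.sqrt (x / (b - x)))))
      = (K-2) / (2 * (K - x) * (Real.sqrt x * Real.sqrt (b - x))) := by
    rw [e2]
    have hden : 1 + ((K-2)/K * (Real.sqrt x / Real.sqrt (b - x))) ^ 2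
        = b * (K - x) / (K * (b - x)) := by
      rw [mul_pow, div_pow, div_pow, hsx, hsbx]
      field_simp
      linear_combination x * hKb
    rw [hden]
    field_simp
    linear_combination ((K-2)*b) * hsbx
  rw [eB] at hB
  -- assemble
  have hF : HasDerivAt (Fk K)
      ((1/π) * (K * (1 / (2 * Real.sqrt x * Real.sqrt (b - x)))
        - (K-2) * ((K-2) / (2 * (K - x) * (Real.sqrt x * Real.sqrt (b - x)))))) x := by
    have h := ((hA.const_mul K).sub (hB.const_mul (K-2))).const_mul (1/π)
    have hFk : Fk K = fun y : ℝ => (1/π) * (K * Real.arcsin (Real.sqrt (y / b)) -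
        (K-2) * Real.arctan (((K-2)/K) * Real.sqrt (y / (b - y)))) := by
      unfold Fk; rw [← hbdef]
    rw [hFk]
    exact h
  convert hF using 1
  have hrad : 4 * K * (K - 1) * x - K ^ 2 * x ^ 2
      = (K * (Real.sqrt x * Real.sqrt (b - x))) ^ 2 := by
    have h2 : (K * (Real.sqrt x * Real.sqrt (b - x))) ^ 2 = K^2 * (x * (b - x)) := by
      rw [mul_pow, mul_pow, hsx, hsbx]
    rw [h2, hbdef]; field_simp
  rw [hrad, Real.sqrt_sq (by positivity)]
  have hKx2 : K * x - x ^ 2 = x * (K - x) := by ring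
  rw [hKx2]
  rw [div_eq_iff (by positivity : x * (K - x) ≠ 0)]
  field_simp
  linear_combination (K*Real.sqrt (b-x)^2)*hsx + (K*x)*hsbx + x*hKb

lemma nu_tendsto_zero (K : ℝ) (hK : 2 ≤ K) :
    Tendsto (Fk K) (nhdsWithin 0 (Set.Ioi 0)) (nhds 0) := by
  have hK0 : 0 < K := lt_of_lt_of_le two_pos hK
  have hb0 : 0 < 4*(K-1)/K := div_pos (by linarith) hK0
  have hcont : ContinuousAt (Fk K) 0 := by
    unfold Fk
    apply ContinuousAt.mul continuousAt_const
    apply ContinuousAt.sub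
    · exact (continuous_const.mul (Real.continuous_arcsin.comp'
        (Real.continuous_sqrt.comp' (continuous_id.div_const _)))).continuousAt
    · apply ContinuousAt.mul continuousAt_const
      apply ContinuousAt.comp' (Real.continuous_arctan.continuousAt)
      apply ContinuousAt.mul continuousAt_const
      apply ContinuousAt.comp' (Real.continuous_sqrt.continuousAt)
      exact ContinuousAt.div continuousAt_id
        ((continuous_const.sub continuous_id).continuousAt) (by simpa using hb0.ne')
  have h0 : Fk K 0 = 0 := by
    unfold Fk
    norm_num
  have h := hcont.tendsto.mono_left (nhdsWithin_le_nhds (s := Set.Ioi 0))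
  rwa [h0] at h

lemma sqrt_tendsto_atTop : Tendsto Real.sqrt atTop atTop := by
  refine tendsto_atTop_atTop.mpr fun C => ⟨C^2, fun x hx => ?_⟩
  calc C ≤ |C| := le_abs_self C
  _ = Real.sqrt (C^2) := (Real.sqrt_sq_eq_abs C).symm
  _ ≤ Real.sqrt x := Real.sqrt_le_sqrt hx

lemma nu_tendsto_one (K : ℝ) (hK : 2 ≤ K) :
    Tendsto (Fk K) (nhdsWithin (4*(K-1)/K) (Set.Iio (4*(K-1)/K))) (nhds 1) := by
  have hK0 : 0 < K := lt_of_lt_of_le two_pos hK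
  obtain ⟨b, hbdef⟩ : ∃ b : ℝ, b = 4*(K-1)/K := ⟨_, rfl⟩
  have hb0 : 0 < b := by rw [hbdef]; exact div_pos (by linarith) hK0
  rw [← hbdef]
  have T1 : Tendsto (fun y : ℝ => K * Real.arcsin (Real.sqrt (y / (4*(K-1)/K))))
      (nhdsWithin b (Set.Iio b)) (nhds (K * (π/2))) := by
    have hc : ContinuousAt (fun y : ℝ => K * Real.arcsin (Real.sqrt (y / (4*(K-1)/K)))) b :=
      (continuous_const.mul (Real.continuous_arcsin.comp'
        (Real.continuous_sqrt.comp' (continuous_id.div_const _)))).continuousAt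
    have hval : K * Real.arcsin (Real.sqrt (b / (4*(K-1)/K))) = K * (π/2) := by
      rw [← hbdef, div_self hb0.ne', Real.sqrt_one, Real.arcsin_one]
    have h := hc.tendsto.mono_left (nhdsWithin_le_nhds (s := Set.Iio b))
    rwa [hval] at h
  have T2 : Tendsto (fun y : ℝ => (K-2) * Real.arctan ((K-2)/K * Real.sqrt (y / (4*(K-1)/K - y))))
      (nhdsWithin b (Set.Iio b)) (nhds ((K-2) * (π/2))) := by
    rcases eq_or_lt_of_le hK with h2 | h2
    · simp [show K - 2 = 0 by linarith]
    · have hc0 : 0 < (K-2)/K := div_pos (by linarith) hK0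
      have h1 : Tendsto (fun y : ℝ => b - y) (nhdsWithin b (Set.Iio b)) (nhdsWithin 0 (Set.Ioi 0)) := by
        rw [tendsto_nhdsWithin_iff]
        constructor
        · have : Tendsto (fun y : ℝ => b - y) (nhds b) (nhds (b - b)) :=
            (continuous_const.sub continuous_id).tendsto b
          simpa using this.mono_left nhdsWithin_le_nhds
        · exact eventually_mem_nhdsWithin.mono fun y hy => Set.mem_Ioi.2 (sub_pos.2 hy)
      have h2' : Tendsto (fun y : ℝ => (b - y)⁻¹) (nhdsWithin b (Set.Iio b)) atTop :=
        tendsto_inv_nhdsGT_zero.comp h1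
      have hid : Tendsto (fun y : ℝ => y) (nhdsWithin b (Set.Iio b)) (nhds b) :=
        tendsto_id.mono_left nhdsWithin_le_nhds
      have h3 : Tendsto (fun y : ℝ => y / (4*(K-1)/K - y)) (nhdsWithin b (Set.Iio b)) atTop := by
        have := Filter.Tendsto.pos_mul_atTop hb0 hid h2'
        simpa [div_eq_mul_inv, hbdef] using this
      have h4 : Tendsto (fun y : ℝ => (K-2)/K * Real.sqrt (y / (4*(K-1)/K - y)))
          (nhdsWithin b (Set.Iio b)) atTop :=
        Filter.Tendsto.const_mul_atTop hc0 (sqrt_tendsto_atTop.comp h3)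
      have h5 : Tendsto (fun y : ℝ => Real.arctan ((K-2)/K * Real.sqrt (y / (4*(K-1)/K - y))))
          (nhdsWithin b (Set.Iio b)) (nhds (π/2)) :=
        (Real.tendsto_arctan_atTop.comp h4).mono_right nhdsWithin_le_nhds
      exact h5.const_mul _
  have T : Tendsto (Fk K) (nhdsWithin b (Set.Iio b))
      (nhds ((1/π) * (K * (π/2) - (K-2) * (π/2)))) := by
    unfold Fk
    exact ((T1.sub T2).const_mul (1/π))
  have hval : (1/π) * (K * (π/2) - (K-2) * (π/2)) = 1 := by
    have hπ : π ≠ 0 := Real.pi_ne_zero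
    field_simp
    ring
  rwa [hval] at T

set_option maxHeartbeats 1000000 in
lemma nu_integrable (K : ℝ) (hK : 2 ≤ K) :
    IntervalIntegrable (fun x : ℝ =>
      (1 / (2 * π)) * Real.sqrt (4 * K * (K - 1) * x - K ^ 2 * x ^ 2) / (K * x - x ^ 2))
      volume 0 (4*(K-1)/K) := by
  have hK0 : 0 < K := lt_of_lt_of_le two_pos hK
  have hπ : (0:ℝ) < π := Real.pi_pos
  obtain ⟨b, hbdef⟩ : ∃ b : ℝ, b = 4*(K-1)/K := ⟨_, rfl⟩
  rw [← hbdef]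
  have hb0 : 0 < b := by rw [hbdef]; exact div_pos (by linarith) hK0
  have hbK : b ≤ K := by rw [hbdef, div_le_iff₀ hK0]; nlinarith
  obtain ⟨C, hCdef⟩ : ∃ C : ℝ, C = K / (2 * π * Real.sqrt (b/2)) := ⟨_, rfl⟩
  have hC0 : 0 < C := by
    rw [hCdef]
    apply div_pos hK0
    positivity
  have h1 : IntervalIntegrable (fun x : ℝ => x ^ (-(1/2) : ℝ)) volume 0 b :=
    intervalIntegral.intervalIntegrable_rpow' (by norm_num)
  have h2 : IntervalIntegrable (fun x : ℝ => (b - x) ^ (-(1/2) : ℝ)) volume 0 b := by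
    have := h1.comp_sub_left b
    simpa using this.symm
  have hg : IntervalIntegrable (fun x : ℝ =>
      C * (x ^ (-(1/2) : ℝ) + (b - x) ^ (-(1/2) : ℝ))) volume 0 b :=
    (h1.add h2).const_mul C
  apply hg.mono_fun'
  · apply Measurable.aestronglyMeasurable
    fun_prop
  · rw [Set.uIoc_of_le hb0.le]
    refine (MeasureTheory.ae_restrict_iff' measurableSet_Ioc).mpr
      (Filter.Eventually.of_forall fun x hx => ?_)
    dsimp only
    have hx0 : 0 < x := hx.1
    have hxb : x ≤ b := hx.2
    have hxK : x ≤ K := hxb.trans hbK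
    have hbx : 0 ≤ b - x := by linarith
    have hrad : 4 * K * (K - 1) * x - K ^ 2 * x ^ 2
        = (K * (Real.sqrt x * Real.sqrt (b - x))) ^ 2 := by
      have h2' : (K * (Real.sqrt x * Real.sqrt (b - x))) ^ 2 = K^2 * (x * (b - x)) := by
        rw [mul_pow, mul_pow, Real.sq_sqrt hx0.le, Real.sq_sqrt hbx]
      rw [h2', hbdef]; field_simp
    have hfnn : 0 ≤ (1 / (2 * π)) * Real.sqrt (4 * K * (K - 1) * x - K ^ 2 * x ^ 2)
        / (K * x - x ^ 2) := by
      apply div_nonneg (by positivity)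
      nlinarith
    have hgnn1 : 0 ≤ x ^ (-(1/2) : ℝ) := Real.rpow_nonneg hx0.le _
    have hgnn2 : 0 ≤ (b - x) ^ (-(1/2) : ℝ) := Real.rpow_nonneg hbx _
    rw [Real.norm_eq_abs, abs_of_nonneg hfnn]
    rcases eq_or_lt_of_le hxb with hxb' | hxb'
    · -- x = b : f x = 0
      have : 4 * K * (K - 1) * x - K ^ 2 * x ^ 2 = 0 := by
        rw [hrad, ← hxb']; simp
      rw [this, Real.sqrt_zero, mul_zero, zero_div]
      exact mul_nonneg hC0.le (add_nonneg hgnn1 hgnn2)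
    · have hKx : 0 < K - x := by
        rcases lt_or_ge x K with h | h
        · linarith
        · exfalso; linarith
      have hsx0 : 0 < Real.sqrt x := Real.sqrt_pos.2 hx0
      have hsbx0 : 0 < Real.sqrt (b - x) := Real.sqrt_pos.2 (by linarith)
      have hfx : (1 / (2 * π)) * Real.sqrt (4 * K * (K - 1) * x - K ^ 2 * x ^ 2)
          / (K * x - x ^ 2) = K * Real.sqrt (b - x) / (2 * π * Real.sqrt x * (K - x)) := by
        rw [hrad, Real.sqrt_sq (by positivity)]
        have hxx : Real.sqrt x * Real.sqrt x = x := Real.mul_self_sqrt hx0.le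
        rw [div_eq_div_iff (by nlinarith) (by positivity)]
        field_simp
        linear_combination hxx
      rw [hfx]
      have hb2 : 0 < Real.sqrt (b/2) := Real.sqrt_pos.2 (by linarith)
      have key1 : K * Real.sqrt (b - x) / (2 * π * Real.sqrt x * (K - x))
          ≤ K / (2 * π * Real.sqrt x * Real.sqrt (b - x)) := by
        have hss : Real.sqrt (b - x) * Real.sqrt (b - x) = b - x :=
          Real.mul_self_sqrt (by linarith)
        rw [div_le_div_iff₀ (by positivity) (by positivity)]
        have h' : Real.sqrt (b-x) * Real.sqrt (b-x) ≤ K - x := by rw [hss]; linarith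
        nlinarith [mul_le_mul_of_nonneg_left h' (by positivity : (0:ℝ) ≤ 2 * π * K * Real.sqrt x)]
      rcases le_or_gt x (b/2) with hcase | hcase
      · -- bound by C * x ^ (-1/2)
        have hs2 : Real.sqrt (b/2) ≤ Real.sqrt (b - x) := Real.sqrt_le_sqrt (by linarith)
        have key2 : K / (2 * π * Real.sqrt x * Real.sqrt (b - x))
            ≤ C * x ^ (-(1/2) : ℝ) := by
          have hxr : x ^ (-(1/2) : ℝ) = (Real.sqrt x)⁻¹ := by
            rw [Real.rpow_neg hx0.le, Real.sqrt_eq_rpow]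
          rw [hxr]
          have e : C * (Real.sqrt x)⁻¹ = K / (2 * π * Real.sqrt x * Real.sqrt (b/2)) := by
            rw [hCdef]; field_simp
          rw [e]
          gcongr
        calc K * Real.sqrt (b - x) / (2 * π * Real.sqrt x * (K - x))
            ≤ K / (2 * π * Real.sqrt x * Real.sqrt (b - x)) := key1
          _ ≤ C * x ^ (-(1/2) : ℝ) := key2
          _ ≤ C * (x ^ (-(1/2) : ℝ) + (b - x) ^ (-(1/2) : ℝ)) := by
              nlinarith [mul_nonneg hC0.le hgnn2]
      · -- bound by C * (b-x) ^ (-1/2)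
        have hs2 : Real.sqrt (b/2) ≤ Real.sqrt x := Real.sqrt_le_sqrt (by linarith)
        have key2 : K / (2 * π * Real.sqrt x * Real.sqrt (b - x))
            ≤ C * (b - x) ^ (-(1/2) : ℝ) := by
          have hxr : (b - x) ^ (-(1/2) : ℝ) = (Real.sqrt (b - x))⁻¹ := by
            rw [Real.rpow_neg (by linarith), Real.sqrt_eq_rpow]
          rw [hxr]
          have e : C * (Real.sqrt (b - x))⁻¹
              = K / (2 * π * Real.sqrt (b/2) * Real.sqrt (b - x)) := by
            rw [hCdef]; field_simp
          rw [e]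
          gcongr
        calc K * Real.sqrt (b - x) / (2 * π * Real.sqrt x * (K - x))
            ≤ K / (2 * π * Real.sqrt x * Real.sqrt (b - x)) := key1
          _ ≤ C * (b - x) ^ (-(1/2) : ℝ) := key2
          _ ≤ C * (x ^ (-(1/2) : ℝ) + (b - x) ^ (-(1/2) : ℝ)) := by
              nlinarith [mul_nonneg hC0.le hgnn1]

/-- For `k ≥ 2`, the density `ν_k` integrates to 1 over `(0, 4(k-1)/k)`. -/
theorem nu_k_integrates_to_one (k : ℕ) (hk : 2 ≤ k) :
    ∫ x in Set.Ioo (0:ℝ) (4 * ((k:ℝ) - 1) / k),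
      (1 / (2 * π)) * Real.sqrt (4 * k * ((k:ℝ) - 1) * x - (k:ℝ) ^ 2 * x ^ 2)
        / ((k:ℝ) * x - x ^ 2) = 1 := by
  have hK : (2:ℝ) ≤ (k:ℝ) := by exact_mod_cast hk
  have hb0 : (0:ℝ) < 4 * ((k:ℝ) - 1) / k := div_pos (by linarith) (by linarith)
  rw [← MeasureTheory.integral_Ioc_eq_integral_Ioo, ← intervalIntegral.integral_of_le hb0.le]
  have h := intervalIntegral.integral_eq_sub_of_hasDerivAt_of_tendsto
    (f := Fk (k:ℝ))
    (f' := fun x => (1 / (2 * π)) * Real.sqrt (4 * (k:ℝ) * ((k:ℝ) - 1) * x - (k:ℝ) ^ 2 * x ^ 2)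
        / ((k:ℝ) * x - x ^ 2))
    hb0 (fun x hx => nu_deriv (k:ℝ) hK hx.1 hx.2) (nu_integrable (k:ℝ) hK)
    (nu_tendsto_zero (k:ℝ) hK) (nu_tendsto_one (k:ℝ) hK)
  rw [h]
  norm_num
end

section
/- For each integer k ≥ 2, the second moment of the density ν_k(x) = (1/(2π))·√(4k(k−1)x − k²x²)/(kx − x²) on (0, 4(k−1)/k) equals 2 − 1/k. -/
open Real MeasureTheory

noncomputable def nuF (K b : ℝ) (x : ℝ) : ℝ :=
  (K / (2 * π)) *
    ( -((2 * x - b) / 4 * Real.sqrt (x * (b - x)) + b ^ 2 / 8 * Real.arcsin ((2 * x - b) / b))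
      + K * ( -Real.sqrt (x * (b - x)) + (K - b / 2) * Real.arcsin ((2 * x - b) / b)
        + (K - 2) * Real.arcsin ((b * K - (2 * K - b) * x) / (b * (K - x))) ) )

lemma nuF_hasDerivAt (K b x : ℝ) (hK : 2 ≤ K) (hb : b = 4 * (K - 1) / K)
    (hx : x ∈ Set.Ioo (0:ℝ) b) :
    HasDerivAt (nuF K b) ((K / (2 * π)) * (x * Real.sqrt (x * (b - x)) / (K - x))) x := by
  obtain ⟨hx0, hxb⟩ := hx
  have hK0 : 0 < K := by linarith
  have hb0 : 0 < b := by rw [hb]; exact div_pos (by linarith) hK0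
  have hbK : b ≤ K := by
    rw [hb, div_le_iff₀ hK0]; nlinarith [sq_nonneg (K - 2)]
  have hxK : x < K := lt_of_lt_of_le hxb hbK
  have hKx : 0 < K - x := by linarith
  have hq : 0 < x * (b - x) := mul_pos hx0 (by linarith)
  set σ := Real.sqrt (x * (b - x)) with hσ
  have hσ0 : 0 < σ := Real.sqrt_pos.mpr hq
  have hs2 : σ ^ 2 = x * (b - x) := Real.sq_sqrt hq.le
  have hKb2 : K * (K - b) = (K - 2) ^ 2 := by rw [hb]; field_simp; ring
  clear_value σ
  have dpoly : HasDerivAt (fun y : ℝ => y * (b - y)) (b - 2 * x) x := by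
    have h := (hasDerivAt_id x).mul ((hasDerivAt_const x b).sub (hasDerivAt_id x))
    refine h.congr_deriv ?_; simp only [id_eq, Pi.sub_apply]; ring
  have dS : HasDerivAt (fun y : ℝ => Real.sqrt (y * (b - y))) ((b - 2 * x) / (2 * σ)) x := by
    have h := (Real.hasDerivAt_sqrt (ne_of_gt hq)).comp x dpoly
    refine h.congr_deriv ?_
    rw [← hσ]; ring
  have dR : HasDerivAt (fun y : ℝ => Real.arcsin ((2 * y - b) / b)) (1 / σ) x := by
    have hlin : HasDerivAt (fun y : ℝ => (2 * y - b) / b) (2 / b) x := by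
      have h : HasDerivAt (fun y : ℝ => 2 * y - b) 2 x := by
        simpa using ((hasDerivAt_id x).const_mul 2).sub_const b
      simpa using h.div_const b
    have hne1 : (2 * x - b) / b ≠ -1 := by
      have : -1 < (2 * x - b) / b := by rw [lt_div_iff₀ hb0]; linarith
      exact this.ne'
    have hne2 : (2 * x - b) / b ≠ 1 := ((div_lt_one hb0).mpr (by linarith)).ne
    have h := (Real.hasDerivAt_arcsin hne1 hne2).comp x hlin
    have hsq : 1 - ((2 * x - b) / b) ^ 2 = (2 * σ / b) ^ 2 := by
      field_simp
      linear_combination (-4 : ℝ) * hs2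
    rw [hsq, Real.sqrt_sq (by positivity)] at h
    refine h.congr_deriv ?_
    field_simp
  have dW : HasDerivAt
      (fun y : ℝ => (K - 2) * Real.arcsin ((b * K - (2 * K - b) * y) / (b * (K - y))))
      (-(K * (K - b) / (σ * (K - x)))) x := by
    rcases eq_or_lt_of_le hK with h2 | h2
    · have hfun : ∀ y : ℝ,
          (K - 2) * Real.arcsin ((b * K - (2 * K - b) * y) / (b * (K - y))) = 0 := fun y => by
        rw [show K - 2 = 0 by linarith]; ring
      have h := (hasDerivAt_const x (0:ℝ)).congr_of_eventuallyEq
        (Filter.Eventually.of_forall hfun)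
      refine h.congr_deriv ?_
      rw [hKb2, show K - 2 = 0 by linarith]
      norm_num
    · have hK2 : 0 < K - 2 := by linarith
      have hDpos : 0 < b * (K - x) := mul_pos hb0 hKx
      have hu : HasDerivAt (fun y : ℝ => b * K - (2 * K - b) * y) (-(2 * K - b)) x := by
        exact ((hasDerivAt_const x (b * K)).sub ((hasDerivAt_id x).const_mul (2 * K - b))).congr_deriv (by ring)
      have hv : HasDerivAt (fun y : ℝ => b * (K - y)) (-b) x := by
        have h := ((hasDerivAt_const x K).sub (hasDerivAt_id x)).const_mul b
        refine h.congr_deriv ?_; ring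
      have hw := hu.div hv (ne_of_gt hDpos)
      have hN2 : (b * (K - x)) ^ 2 - (b * K - (2 * K - b) * x) ^ 2
          = 4 * (K - 2) ^ 2 * (x * (b - x)) := by
        rw [hb]; field_simp; ring
      have hNpos : 0 < 4 * (K - 2) ^ 2 * (x * (b - x)) := by positivity
      have hlt1 : (b * K - (2 * K - b) * x) / (b * (K - x)) < 1 := by
        rw [div_lt_one hDpos]
        nlinarith [hN2, hNpos, hDpos]
      have hgt1 : -1 < (b * K - (2 * K - b) * x) / (b * (K - x)) := by
        rw [lt_div_iff₀ hDpos]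
        nlinarith [hN2, hNpos, hDpos]
      have h := ((Real.hasDerivAt_arcsin hgt1.ne' hlt1.ne).comp x hw).const_mul (K - 2)
      have hsqw : 1 - ((b * K - (2 * K - b) * x) / (b * (K - x))) ^ 2
          = (2 * (K - 2) * σ / (b * (K - x))) ^ 2 := by
        field_simp
        linear_combination (-4 * (K-2)^2 : ℝ) * hs2 - hN2 + 8 * (x * (b - x)) * hKb2
      rw [hsqw, Real.sqrt_sq (by positivity)] at h
      refine h.congr_deriv ?_
      rw [show -(2 * K - b) * (b * (K - x)) - (b * K - (2 * K - b) * x) * -b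
          = 2 * b * K * (b - K) from by ring]
      have hr : (K - 2) * (1 / (2 * (K - 2) * σ / (b * (K - x)))
          * (2 * b * K * (b - K) / (b * (K - x)) ^ 2)) = K * (b - K) / (σ * (K - x)) := by
        field_simp
      rw [hr, show K * (b - K) = -(K * (K - b)) from by ring, neg_div]
  have dlin : HasDerivAt (fun y : ℝ => (2 * y - b) / 4) (2 / 4) x := by
    have h : HasDerivAt (fun y : ℝ => 2 * y - b) 2 x := by
      simpa using ((hasDerivAt_id x).const_mul 2).sub_const b
    exact h.div_const 4
  have total := ((((dlin.mul dS).add (dR.const_mul (b ^ 2 / 8))).neg).add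
    ((((dS.neg.add (dR.const_mul (K - b / 2)))).add dW).const_mul K)).const_mul (K / (2 * π))
  unfold nuF
  refine total.congr_deriv ?_
  have hπ : π ≠ 0 := Real.pi_ne_zero
  have hx2 : Real.sqrt x * Real.sqrt (b - x) = σ := by
    rw [hσ, Real.sqrt_mul hx0.le]
  rw [← hσ]
  field_simp
  linear_combination (-32*(K-x) - 64*x) * hs2

lemma nuF_continuousOn (K b : ℝ) (hK : 2 ≤ K) (hb : b = 4 * (K - 1) / K) :
    ContinuousOn (nuF K b) (Set.Icc 0 b) := by
  have hK0 : 0 < K := by linarith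
  have hb0 : 0 < b := by rw [hb]; exact div_pos (by linarith) hK0
  have csqrt : Continuous fun x : ℝ => Real.sqrt (x * (b - x)) :=
    Real.continuous_sqrt.comp (by continuity)
  have carcsin : Continuous fun x : ℝ => Real.arcsin ((2 * x - b) / b) :=
    Real.continuous_arcsin.comp (by continuity)
  have h3 : ContinuousOn
      (fun x : ℝ => (K - 2) * Real.arcsin ((b * K - (2 * K - b) * x) / (b * (K - x))))
      (Set.Icc 0 b) := by
    rcases eq_or_lt_of_le hK with h2 | h2
    · exact (continuousOn_const (c := (0:ℝ))).congr fun x _ => by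
        rw [show K - 2 = 0 by linarith]; simp
    · have hbK : b < K := by
        have h5 : K - b = (K - 2) ^ 2 / K := by rw [hb]; field_simp; ring
        have := div_pos (pow_pos (by linarith : (0:ℝ) < K - 2) 2) hK0
        linarith [h5 ▸ this]
      apply ContinuousOn.mul continuousOn_const
      apply Real.continuous_arcsin.comp_continuousOn
      apply ContinuousOn.div (by fun_prop) (by fun_prop)
      intro x hx
      exact mul_ne_zero (ne_of_gt hb0) (by have := hx.2; intro h; linarith)
  unfold nuF
  apply ContinuousOn.mul continuousOn_const
  apply ContinuousOn.add
  · exact ((((by continuity : Continuous fun x : ℝ => (2 * x - b) / 4).mul csqrt).add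
      (continuous_const.mul carcsin : Continuous fun x : ℝ => b ^ 2 / 8 * Real.arcsin ((2 * x - b) / b))).neg).continuousOn
  · apply ContinuousOn.mul continuousOn_const
    exact ((csqrt.neg.add (continuous_const.mul carcsin : Continuous fun x : ℝ => (K - b / 2) * Real.arcsin ((2 * x - b) / b))).continuousOn).add h3

lemma nuF_sub (K b : ℝ) (hK : 2 ≤ K) (hb : b = 4 * (K - 1) / K) :
    nuF K b b - nuF K b 0 = 2 - 1 / K := by
  have hK0 : 0 < K := by linarith
  have hb0 : 0 < b := by rw [hb]; exact div_pos (by linarith) hK0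
  have hbne : b ≠ 0 := ne_of_gt hb0
  have h4 : (K - 2) * Real.arcsin ((b * K - (2 * K - b) * b) / (b * (K - b)))
      = (K - 2) * (-(π / 2)) := by
    rcases eq_or_lt_of_le hK with h2 | h2
    · rw [show K - 2 = 0 by linarith]; ring
    · have hKb : 0 < K - b := by
        have : K - b = (K - 2) ^ 2 / K := by rw [hb]; field_simp; ring
        rw [this]; exact div_pos (pow_pos (by linarith) 2) hK0
      rw [show b * K - (2 * K - b) * b = -(b * (K - b)) by ring, neg_div,
        div_self (ne_of_gt (mul_pos hb0 hKb)), Real.arcsin_neg_one]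
  rw [nuF, nuF,
    show (0:ℝ) * (b - 0) = 0 by ring, show b * (b - b) = 0 by ring, Real.sqrt_zero,
    show (2 * (0:ℝ) - b) / b = -1 by rw [show 2 * (0:ℝ) - b = -b by ring, neg_div, div_self hbne],
    show (2 * b - b) / b = 1 by rw [show 2 * b - b = b by ring, div_self hbne],
    show (b * K - (2 * K - b) * 0) / (b * (K - 0)) = 1 by
      rw [show b * K - (2 * K - b) * 0 = b * K by ring, show b * (K - 0) = b * K by ring,
        div_self (mul_ne_zero hbne (ne_of_gt hK0))],
    h4, Real.arcsin_one, Real.arcsin_neg_one, hb]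
  have hpi : π ≠ 0 := Real.pi_ne_zero
  field_simp
  ring

theorem nu_aux (K : ℝ) (hK : 2 ≤ K) :
    ∫ x in Set.Ioo (0:ℝ) (4 * (K - 1) / K),
      x ^ 2 * ((1 / (2 * π)) * Real.sqrt (4 * K * (K - 1) * x - K ^ 2 * x ^ 2)
        / (K * x - x ^ 2)) = 2 - 1 / K := by
  have hK0 : 0 < K := by linarith
  set b : ℝ := 4 * (K - 1) / K with hb
  have hb0 : 0 < b := by
    rw [hb]; exact div_pos (by linarith) hK0
  have hbK : b ≤ K := by
    rw [hb, div_le_iff₀ hK0]; nlinarith [sq_nonneg (K - 2)]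
  have key : ∀ x ∈ Set.Ioo (0:ℝ) b,
      x ^ 2 * ((1 / (2 * π)) * Real.sqrt (4 * K * (K - 1) * x - K ^ 2 * x ^ 2)
        / (K * x - x ^ 2)) = (K / (2 * π)) * (x * Real.sqrt (x * (b - x)) / (K - x)) := by
    intro x hx
    obtain ⟨hx0, hxb⟩ := hx
    have hxK : x < K := lt_of_lt_of_le hxb hbK
    have h1 : 4 * K * (K - 1) * x - K ^ 2 * x ^ 2 = K ^ 2 * (x * (b - x)) := by
      rw [hb]; field_simp
    have h2 : Real.sqrt (4 * K * (K - 1) * x - K ^ 2 * x ^ 2)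
        = K * Real.sqrt (x * (b - x)) := by
      rw [h1, Real.sqrt_mul (sq_nonneg K), Real.sqrt_sq hK0.le]
    rw [h2]
    have h3 : K * x - x ^ 2 = x * (K - x) := by ring
    rw [h3]
    have hKx : K - x ≠ 0 := by intro h; linarith
    have hpi : π ≠ 0 := Real.pi_ne_zero
    set s := Real.sqrt (x * (b - x)) with hs
    field_simp
  have hnonneg : ∀ x ∈ Set.Ioo (0:ℝ) b,
      0 ≤ x ^ 2 * ((1 / (2 * π)) * Real.sqrt (4 * K * (K - 1) * x - K ^ 2 * x ^ 2)
        / (K * x - x ^ 2)) := by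
    intro x hx
    rw [key x hx]
    obtain ⟨hx0, hxb⟩ := hx
    have hxK : x < K := lt_of_lt_of_le hxb hbK
    have hpi : (0:ℝ) < π := Real.pi_pos
    apply mul_nonneg (by positivity)
    apply div_nonneg (mul_nonneg hx0.le (Real.sqrt_nonneg _))
    linarith
  have hderiv : ∀ x ∈ Set.Ioo (0:ℝ) b,
      HasDerivAt (nuF K b)
        (x ^ 2 * ((1 / (2 * π)) * Real.sqrt (4 * K * (K - 1) * x - K ^ 2 * x ^ 2)
          / (K * x - x ^ 2))) x := by
    intro x hx
    rw [key x hx]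
    exact nuF_hasDerivAt K b x hK hb hx
  have hcont : ContinuousOn (nuF K b) (Set.Icc 0 b) := nuF_continuousOn K b hK hb
  have hint : IntervalIntegrable
      (fun x => x ^ 2 * ((1 / (2 * π)) * Real.sqrt (4 * K * (K - 1) * x - K ^ 2 * x ^ 2)
        / (K * x - x ^ 2))) volume 0 b := by
    apply intervalIntegral.intervalIntegrable_deriv_of_nonneg (g := nuF K b)
    · rwa [Set.uIcc_of_le hb0.le]
    · rw [min_eq_left hb0.le, max_eq_right hb0.le]; exact hderiv
    · rw [min_eq_left hb0.le, max_eq_right hb0.le]; exact hnonneg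
  rw [← MeasureTheory.integral_Ioc_eq_integral_Ioo,
    ← intervalIntegral.integral_of_le hb0.le,
    intervalIntegral.integral_eq_sub_of_hasDeriv_right_of_le hb0.le hcont
      (fun x hx => (hderiv x hx).hasDerivWithinAt) hint,
    nuF_sub K b hK hb]

/-- For `k ≥ 2`, the second moment of the density `ν_k` equals `2 - 1/k`. -/
theorem nu_k_second_moment (k : ℕ) (hk : 2 ≤ k) :
    ∫ x in Set.Ioo (0:ℝ) (4 * ((k:ℝ) - 1) / k),
      x ^ 2 * ((1 / (2 * π)) * Real.sqrt (4 * k * ((k:ℝ) - 1) * x - (k:ℝ) ^ 2 * x ^ 2)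
        / ((k:ℝ) * x - x ^ 2)) = 2 - 1 / (k:ℝ) := by
  exact nu_aux (k:ℝ) (by exact_mod_cast hk)
end

section
/- The m-th moment of the Marchenko–Pastur density (1/(2π))√(4/x − 1) on (0,4) equals the Catalan number C_m = (1/(m+1))·binom(2m, m), for every natural number m. -/
open Real MeasureTheory

noncomputable def MPaux.S (n : ℕ) : ℝ := ∫ x in (0:ℝ)..(π/2), Real.sin x ^ n

namespace MPaux

lemma S_rec (n : ℕ) : S (n + 2) = (n + 1) / (n + 2) * S n := by
  have h := integral_sin_pow (a := 0) (b := π/2) (n := n)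
  simp [S, Real.sin_zero, Real.cos_pi_div_two] at h ⊢
  rw [h]

lemma S_even (m : ℕ) :
    S (2 * m) = π * (2 * m).factorial / (2 * 4 ^ m * (m.factorial : ℝ) ^ 2) := by
  induction m with
  | zero => simp [S]
  | succ k ih =>
    have h2 : 2 * (k + 1) = 2 * k + 2 := by ring
    rw [h2, S_rec, ih]
    have hk : (k.factorial : ℝ) ≠ 0 := Nat.cast_ne_zero.mpr k.factorial_ne_zero
    have h4 : (4 : ℝ) ^ k ≠ 0 := by positivity
    have hfs : ((2 * k + 2).factorial : ℝ)
        = (2 * k + 2) * ((2 * k + 1) * (2 * k).factorial) := by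
      push_cast [show 2 * k + 2 = (2 * k + 1) + 1 by ring, Nat.factorial_succ]
      ring
    have hfs2 : ((k + 1).factorial : ℝ) = (k + 1) * k.factorial := by
      push_cast [Nat.factorial_succ]; ring
    have h2k2 : (2 * (k : ℝ) + 2) ≠ 0 := by positivity
    rw [hfs, hfs2]
    field_simp
    push_cast
    ring

lemma image_eq : (fun θ : ℝ => 2 - 2 * Real.cos θ) '' Set.Ioo 0 π = Set.Ioo (0:ℝ) 4 := by
  ext x
  constructor
  · rintro ⟨θ, ⟨h0, hπ⟩, rfl⟩
    have hmem : θ ∈ Set.Icc 0 π := ⟨h0.le, hπ.le⟩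
    have h1 : Real.cos θ < 1 := by
      have := Real.strictAntiOn_cos (Set.left_mem_Icc.mpr Real.pi_pos.le) hmem h0
      simpa using this
    have h2 : -1 < Real.cos θ := by
      have := Real.strictAntiOn_cos hmem (Set.right_mem_Icc.mpr Real.pi_pos.le) hπ
      simpa using this
    exact ⟨by dsimp only; nlinarith, by dsimp only; nlinarith⟩
  · rintro ⟨h0, h4⟩
    refine ⟨Real.arccos (1 - x / 2), ⟨?_, ?_⟩, ?_⟩
    · rw [Real.arccos_pos]; linarith
    · have h := Real.arccos_le_pi (1 - x / 2)
      rcases lt_or_eq_of_le h with h' | h'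
      · exact h'
      · exfalso
        have : Real.cos (Real.arccos (1 - x / 2)) = 1 - x / 2 :=
          Real.cos_arccos (by linarith) (by linarith)
        rw [h', Real.cos_pi] at this
        linarith
    · have : Real.cos (Real.arccos (1 - x / 2)) = 1 - x / 2 :=
        Real.cos_arccos (by linarith) (by linarith)
      show 2 - 2 * Real.cos (Real.arccos (1 - x / 2)) = x
      rw [this]; ring

end MPaux

open MPaux in
/-- The `m`-th moment of the Marchenko–Pastur density equals the Catalan number
`C_m = binom(2m, m)/(m+1)`. -/
theorem MP_moments_eq_catalan (m : ℕ) :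
    ∫ x in Set.Ioo (0:ℝ) 4, x ^ m * ((1 / (2 * π)) * Real.sqrt (4 / x - 1))
      = (Nat.choose (2 * m) m : ℝ) / (m + 1) := by
  -- Step A: substitution x = 2 - 2 cos θ
  have hderiv : ∀ θ ∈ Set.Ioo (0:ℝ) π,
      HasDerivWithinAt (fun θ : ℝ => 2 - 2 * Real.cos θ) (2 * Real.sin θ) (Set.Ioo 0 π) θ := by
    intro θ _
    have : HasDerivAt (fun θ : ℝ => 2 - 2 * Real.cos θ) (2 * Real.sin θ) θ := by
      simpa using ((Real.hasDerivAt_cos θ).const_mul 2).const_sub 2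
    exact this.hasDerivWithinAt
  have hinj : Set.InjOn (fun θ : ℝ => 2 - 2 * Real.cos θ) (Set.Ioo 0 π) := by
    intro a ha b hb hab
    have h1 : Real.cos a = Real.cos b := by dsimp at hab; linarith
    exact Real.injOn_cos ⟨ha.1.le, ha.2.le⟩ ⟨hb.1.le, hb.2.le⟩ h1
  have hsub := integral_image_eq_integral_abs_deriv_smul (measurableSet_Ioo)
      hderiv hinj (fun x => x ^ m * ((1 / (2 * π)) * Real.sqrt (4 / x - 1)))
  rw [image_eq] at hsub
  rw [hsub]
  -- Step B: pointwise simplification on (0, π)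
  have hcongr : ∫ θ in Set.Ioo (0:ℝ) π,
      |2 * Real.sin θ| • ((2 - 2 * Real.cos θ) ^ m *
        ((1 / (2 * π)) * Real.sqrt (4 / (2 - 2 * Real.cos θ) - 1)))
      = ∫ θ in Set.Ioo (0:ℝ) π,
        (1 / (2 * π)) * ((2 - 2 * Real.cos θ) ^ m * (2 + 2 * Real.cos θ)) := by
    apply setIntegral_congr_fun measurableSet_Ioo
    intro θ ⟨h0, hπ⟩
    have hs : 0 < Real.sin θ := Real.sin_pos_of_pos_of_lt_pi h0 hπ
    have hmem : θ ∈ Set.Icc 0 π := ⟨h0.le, hπ.le⟩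
    have hc1 : Real.cos θ < 1 := by
      have := Real.strictAntiOn_cos (Set.left_mem_Icc.mpr Real.pi_pos.le) hmem h0
      simpa using this
    have hc2 : -1 < Real.cos θ := by
      have := Real.strictAntiOn_cos hmem (Set.right_mem_Icc.mpr Real.pi_pos.le) hπ
      simpa using this
    have hne : (2 : ℝ) - 2 * Real.cos θ ≠ 0 := by nlinarith
    have harg : 4 / (2 - 2 * Real.cos θ) - 1
        = (2 + 2 * Real.cos θ) / (2 - 2 * Real.cos θ) := by
      have hne' : (1 : ℝ) - Real.cos θ ≠ 0 := by linarith
      field_simp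
      ring
    have hkey : Real.sqrt ((2 + 2 * Real.cos θ) / (2 - 2 * Real.cos θ)) * Real.sin θ
        = 1 + Real.cos θ := by
      have hnn : (0:ℝ) ≤ (2 + 2 * Real.cos θ) / (2 - 2 * Real.cos θ) := by
        apply div_nonneg <;> nlinarith
      rw [← Real.sqrt_sq hs.le, ← Real.sqrt_mul hnn]
      have hsin2 : Real.sin θ ^ 2 = 1 - Real.cos θ ^ 2 := Real.sin_sq θ
      have : (2 + 2 * Real.cos θ) / (2 - 2 * Real.cos θ) * Real.sin θ ^ 2
          = (1 + Real.cos θ) ^ 2 := by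
        have hne' : (1 : ℝ) - Real.cos θ ≠ 0 := by linarith
        rw [hsin2]; field_simp; ring
      rw [this, Real.sqrt_sq (by nlinarith)]
    dsimp only
    rw [harg]
    rw [abs_of_pos (by linarith : (0:ℝ) < 2 * Real.sin θ)]
    rw [smul_eq_mul]
    linear_combination (2 * (2 - 2 * Real.cos θ) ^ m * (1 / (2 * π))) * hkey
  rw [hcongr]
  -- Step C: convert to interval integral and substitute θ = 2φ
  have hIoo : ∫ θ in Set.Ioo (0:ℝ) π,
      (1 / (2 * π)) * ((2 - 2 * Real.cos θ) ^ m * (2 + 2 * Real.cos θ))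
      = ∫ θ in (0:ℝ)..π, (1 / (2 * π)) * ((2 - 2 * Real.cos θ) ^ m * (2 + 2 * Real.cos θ)) := by
    rw [intervalIntegral.integral_of_le Real.pi_pos.le, integral_Ioc_eq_integral_Ioo]
  rw [hIoo, intervalIntegral.integral_const_mul]
  have hhalf : (2:ℝ) * ∫ x in (0:ℝ)..(π/2),
      (2 - 2 * Real.cos (2 * x)) ^ m * (2 + 2 * Real.cos (2 * x))
      = ∫ θ in (0:ℝ)..π, (2 - 2 * Real.cos θ) ^ m * (2 + 2 * Real.cos θ) := by
    have := intervalIntegral.mul_integral_comp_mul_left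
      (a := (0:ℝ)) (b := π/2) (c := (2:ℝ))
      (f := fun θ : ℝ => (2 - 2 * Real.cos θ) ^ m * (2 + 2 * Real.cos θ))
    rw [show (2:ℝ) * (π/2) = π by ring, show (2:ℝ) * 0 = 0 by ring] at this
    exact this
  rw [← hhalf]
  have hpt : ∀ x : ℝ, (2 - 2 * Real.cos (2 * x)) ^ m * (2 + 2 * Real.cos (2 * x))
      = 4 ^ (m + 1) * (Real.sin x ^ (2 * m) * Real.cos x ^ 2) := by
    intro x
    have hc2' : Real.cos (2 * x) = 2 * Real.cos x ^ 2 - 1 := Real.cos_two_mul x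
    have hpy := Real.sin_sq_add_cos_sq x
    have h1 : (2:ℝ) - 2 * Real.cos (2 * x) = 4 * Real.sin x ^ 2 := by rw [hc2']; nlinarith
    have h2 : (2:ℝ) + 2 * Real.cos (2 * x) = 4 * Real.cos x ^ 2 := by rw [hc2']; ring
    rw [h1, h2, mul_pow, pow_mul, pow_succ]
    ring
  have hint : ∫ x in (0:ℝ)..(π/2),
      (2 - 2 * Real.cos (2 * x)) ^ m * (2 + 2 * Real.cos (2 * x))
      = 4 ^ (m + 1) * ∫ x in (0:ℝ)..(π/2), Real.sin x ^ (2 * m) * Real.cos x ^ 2 := by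
    rw [← intervalIntegral.integral_const_mul]
    exact intervalIntegral.integral_congr (fun x _ => hpt x)
  rw [hint]
  -- Step D: evaluate ∫ sin^{2m} cos² = S(2m) - S(2m+2)
  have hJ : ∫ x in (0:ℝ)..(π/2), Real.sin x ^ (2 * m) * Real.cos x ^ 2
      = S (2 * m) - S (2 * m + 2) := by
    have hcs : ∀ x : ℝ, Real.sin x ^ (2 * m) * Real.cos x ^ 2
        = Real.sin x ^ (2 * m) - Real.sin x ^ (2 * m + 2) := by
      intro x
      have : Real.cos x ^ 2 = 1 - Real.sin x ^ 2 := Real.cos_sq' x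
      rw [this, pow_add]; ring
    rw [intervalIntegral.integral_congr (fun x _ => hcs x),
      intervalIntegral.integral_sub (by apply Continuous.intervalIntegrable; fun_prop)
        (by apply Continuous.intervalIntegrable; fun_prop)]
    rfl
  rw [hJ, S_rec, S_even]
  -- final arithmetic
  have hchoose : ((2 * m).choose m : ℝ) * m.factorial * m.factorial = (2 * m).factorial := by
    have := Nat.choose_mul_factorial_mul_factorial (show m ≤ 2 * m by omega)
    have h2 : 2 * m - m = m := by omega
    rw [h2] at this
    exact_mod_cast this
  have hπ : (π : ℝ) ≠ 0 := Real.pi_ne_zero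
  have hm : (m.factorial : ℝ) ≠ 0 := Nat.cast_ne_zero.mpr m.factorial_ne_zero
  have h4 : (4 : ℝ) ^ m ≠ 0 := by positivity
  have hm1 : ((m : ℝ) + 1) ≠ 0 := by positivity
  have h2m2 : (2 * (m : ℝ) + 2) ≠ 0 := by positivity
  rw [← hchoose]
  push_cast
  field_simp
  ring
end

section
/- The average entropy of the Marchenko–Pastur distribution equals −1/2; that is, ∫₀⁴ (−x ln x)·(1/(2π))√(4/x − 1) dx = −1/2. -/
open Real MeasureTheory
open Set Filter Topology

lemma sqrt_div4 (u : ℝ) (hu : 0 ≤ u) : Real.sqrt (u/4) = Real.sqrt u / 2 := by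
  rw [Real.sqrt_eq_iff_eq_sq (by positivity) (by positivity)]
  rw [div_pow, Real.sq_sqrt hu]
  norm_num

lemma D1 (x : ℝ) (hx : x ∈ Ioo (0:ℝ) 4) :
    HasDerivAt (fun y => Real.sqrt (y*(4-y))) ((2-x)/Real.sqrt (x*(4-x))) x := by
  obtain ⟨h0, h4⟩ := hx
  have hpos : 0 < x*(4-x) := by nlinarith
  have h := (Real.hasDerivAt_sqrt hpos.ne').comp x
    (((hasDerivAt_id x).mul ((hasDerivAt_id x).const_sub 4)) : HasDerivAt (fun y => y*(4-y)) _ x)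
  convert h using 1 <;> try rfl
  have hs : Real.sqrt (x*(4-x)) ≠ 0 := by positivity
  field_simp
  simp only [id]; ring

lemma D2 (x : ℝ) (hx : x ∈ Ioo (0:ℝ) 4) :
    HasDerivAt (fun y => Real.arcsin ((y-2)/2)) (1/Real.sqrt (x*(4-x))) x := by
  obtain ⟨h0, h4⟩ := hx
  have hpos : 0 < x*(4-x) := by nlinarith
  have hne1 : (x-2)/2 ≠ -1 := by intro h; nlinarith [h]
  have hne2 : (x-2)/2 ≠ 1 := by intro h; nlinarith [h]
  have hlin : HasDerivAt (fun y : ℝ => (y-2)/2) (1/2) x := by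
    simpa using ((hasDerivAt_id x).sub_const 2).div_const 2
  have h := (Real.hasDerivAt_arcsin hne1 hne2).comp x hlin
  convert h using 1 <;> try rfl
  have h1 : 1 - ((x-2)/2)^2 = (x*(4-x))/4 := by ring
  rw [h1, sqrt_div4 _ hpos.le]
  have hs : Real.sqrt (x*(4-x)) ≠ 0 := by positivity
  field_simp

lemma D3 (t : ℝ) (ht : 0 < t) (x : ℝ) (hx : x ∈ Ioo (0:ℝ) 4) :
    HasDerivAt (fun y => Real.arcsin ((4+(t+2)*(y-2))/(2*(y+t))))
      (Real.sqrt (t*(t+4))/((x+t)*Real.sqrt (x*(4-x)))) x := by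
  obtain ⟨h0, h4⟩ := hx
  have hxt : 0 < x + t := by linarith
  have hpos : 0 < x*(4-x) := by nlinarith
  have hc : 0 < t*(t+4) := by nlinarith
  set c := Real.sqrt (t*(t+4)) with hcdef
  set s := Real.sqrt (x*(4-x)) with hsdef
  have hcpos : 0 < c := Real.sqrt_pos.2 hc
  have hspos : 0 < s := Real.sqrt_pos.2 hpos
  have hc2 : c^2 = t*(t+4) := Real.sq_sqrt hc.le
  have hs2 : s^2 = x*(4-x) := Real.sq_sqrt hpos.le
  have hw : HasDerivAt (fun y => (4+(t+2)*(y-2))/(2*(y+t))) (t*(t+4)/(2*(x+t)^2)) x := by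
    have hnum : HasDerivAt (fun y : ℝ => 4+(t+2)*(y-2)) (t+2) x := by
      simpa using (((hasDerivAt_id x).sub_const 2).const_mul (t+2)).const_add 4
    have hden : HasDerivAt (fun y : ℝ => 2*(y+t)) 2 x := by
      simpa using ((hasDerivAt_id x).add_const t).const_mul 2
    have h := hnum.div hden (by positivity)
    convert h using 1 <;> try rfl
    field_simp
    ring
  have h1mw : 1 - ((4+(t+2)*(x-2))/(2*(x+t)))^2 = (t*(t+4))*(x*(4-x))/(2*(x+t))^2 := by
    field_simp
    ring
  have hrpos : 0 < (t*(t+4))*(x*(4-x))/(2*(x+t))^2 := by positivity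
  have hwlt : ((4+(t+2)*(x-2))/(2*(x+t)))^2 < 1 := by linarith [h1mw, hrpos]
  have hne1 : (4+(t+2)*(x-2))/(2*(x+t)) ≠ -1 := by
    intro h; rw [h] at hwlt; norm_num at hwlt
  have hne2 : (4+(t+2)*(x-2))/(2*(x+t)) ≠ 1 := by
    intro h; rw [h] at hwlt; norm_num at hwlt
  have h := (Real.hasDerivAt_arcsin hne1 hne2).comp x hw
  convert h using 1 <;> try rfl
  have hsq : (t*(t+4))*(x*(4-x))/(2*(x+t))^2 = (c*s/(2*(x+t)))^2 := by
    rw [div_pow, mul_pow, mul_pow, hc2, hs2]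
  rw [h1mw, hsq, Real.sqrt_sq (by positivity)]
  field_simp
  linear_combination hc2

lemma inner_int (t : ℝ) (ht : 0 < t) :
    ∫ x in (0:ℝ)..4, Real.sqrt (x*(4-x)) * ((x-1)/((1+t)*(x+t)))
      = 2*π/(1+t) - π*(t+2) + π*Real.sqrt (t*(t+4)) := by
  have h1t : (0:ℝ) < 1 + t := by linarith
  set c := Real.sqrt (t*(t+4)) with hcdef
  have hc2 : c^2 = t*(t+4) := Real.sq_sqrt (by nlinarith)
  set F : ℝ → ℝ := fun x =>
    ((x-2)/2*Real.sqrt (x*(4-x)) + 2*Real.arcsin ((x-2)/2))/(1+t)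
    - (Real.sqrt (x*(4-x)) + (t+2)*Real.arcsin ((x-2)/2)
       - c * Real.arcsin ((4+(t+2)*(x-2))/(2*(x+t)))) with hF
  have harcs : Continuous (fun x:ℝ => Real.arcsin ((x-2)/2)) :=
    Real.continuous_arcsin.comp ((continuous_id.sub continuous_const).div_const 2)
  have hsqrtc : Continuous (fun x:ℝ => Real.sqrt (x*(4-x))) :=
    Real.continuous_sqrt.comp (continuous_id.mul (continuous_const.sub continuous_id))
  have hcont : ContinuousOn F (Icc (0:ℝ) 4) := by
    have harg : ContinuousOn (fun x:ℝ => (4+(t+2)*(x-2))/(2*(x+t))) (Icc 0 4) := by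
      apply ContinuousOn.div (by fun_prop) (by fun_prop)
      intro x hx
      have := hx.1
      positivity
    have h3 : ContinuousOn (fun x:ℝ => Real.arcsin ((4+(t+2)*(x-2))/(2*(x+t)))) (Icc 0 4) :=
      Real.continuous_arcsin.comp_continuousOn harg
    apply ContinuousOn.sub
    · exact ((((continuous_id.sub continuous_const).div_const 2).mul hsqrtc).add
        (continuous_const.mul harcs : Continuous fun x:ℝ => 2*Real.arcsin ((x-2)/2))).continuousOn.div_const (1+t)
    · exact (hsqrtc.add (continuous_const.mul harcs : Continuous fun x:ℝ => (t+2)*Real.arcsin ((x-2)/2))).continuousOn.sub (h3.const_smul c)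
  have hderiv : ∀ x ∈ Ioo (0:ℝ) 4,
      HasDerivWithinAt F (Real.sqrt (x*(4-x)) * ((x-1)/((1+t)*(x+t)))) (Ioi x) x := by
    intro x hx
    obtain ⟨h0, h4⟩ := hx
    have hxt : (0:ℝ) < x + t := by linarith
    have hpos : 0 < x*(4-x) := by nlinarith
    set s := Real.sqrt (x*(4-x)) with hsdef
    have hspos : 0 < s := Real.sqrt_pos.2 hpos
    have hs2 : s^2 = x*(4-x) := Real.sq_sqrt hpos.le
    have hlin : HasDerivAt (fun y : ℝ => (y-2)/2) (1/2) x := by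
      simpa using ((hasDerivAt_id x).sub_const 2).div_const 2
    have hA := ((hlin.mul (D1 x ⟨h0, h4⟩)).add ((D2 x ⟨h0, h4⟩).const_mul 2)).div_const (1+t)
    have hB := ((D1 x ⟨h0, h4⟩).add ((D2 x ⟨h0, h4⟩).const_mul (t+2))).sub
      ((D3 t ht x ⟨h0, h4⟩).const_mul c)
    have htot := hA.sub hB
    have heq : (1/2*s + (x-2)/2*((2-x)/s) + 2*(1/s))/(1+t)
        - ((2-x)/s + (t+2)*(1/s) - c*(c/((x+t)*s)))
        = s * ((x-1)/((1+t)*(x+t))) := by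
      field_simp
      linear_combination (t - x + 2) * hs2 + 2*(1+t)*hc2
    rw [hF]
    exact (heq ▸ htot).hasDerivWithinAt
  have hint : IntervalIntegrable (fun x => Real.sqrt (x*(4-x)) * ((x-1)/((1+t)*(x+t))))
      volume 0 4 := by
    apply ContinuousOn.intervalIntegrable
    rw [uIcc_of_le (by norm_num)]
    apply ContinuousOn.mul (by fun_prop)
    apply ContinuousOn.div (by fun_prop) (by fun_prop)
    intro x hx
    have := hx.1
    positivity
  have := intervalIntegral.integral_eq_sub_of_hasDeriv_right_of_le (by norm_num) hcont hderiv hint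
  rw [this, hF]
  have e4 : (4+(t+2)*(4-2))/(2*(4+t)) = 1 := by
    rw [div_eq_one_iff_eq (by positivity)]; ring
  have e0 : (4+(t+2)*(0-2))/(2*(0+t)) = -1 := by
    rw [div_eq_iff (by positivity)]; ring
  simp only [e4, e0]
  norm_num [Real.arcsin_one, Real.arcsin_neg_one, Real.sqrt_zero]
  ring

-- log representation: auxiliary derivative facts
lemma logrep_deriv (x : ℝ) (hx : 0 < x) (t : ℝ) (ht : t ∈ Ici (0:ℝ)) :
    HasDerivAt (fun u => Real.log (1+u) - Real.log (x+u))
      ((x-1)/((1+t)*(x+t))) t := by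
  have ht0 : (0:ℝ) ≤ t := ht
  have h1 : (0:ℝ) < 1 + t := by linarith
  have h2 : (0:ℝ) < x + t := by linarith
  have d1 : HasDerivAt (fun u : ℝ => Real.log (1+u)) (1/(1+t)) t := by
    have := (Real.hasDerivAt_log h1.ne').comp t ((hasDerivAt_id t).const_add 1)
    simpa [Function.comp_def] using this
  have d2 : HasDerivAt (fun u : ℝ => Real.log (x+u)) (1/(x+t)) t := by
    have := (Real.hasDerivAt_log h2.ne').comp t ((hasDerivAt_id t).const_add x)
    simpa [Function.comp_def] using this
  have := d1.sub d2
  convert this using 1 <;> try rfl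
  field_simp
  ring

lemma logrep_tendsto (x : ℝ) (hx : 0 < x) :
    Tendsto (fun t => Real.log (1+t) - Real.log (x+t)) atTop (𝓝 0) := by
  have h : (fun t : ℝ => Real.log (1+t) - Real.log (x+t)) =ᶠ[atTop]
      (fun t => Real.log ((1/t+1)/(x/t+1))) := by
    filter_upwards [eventually_gt_atTop 0] with t ht
    rw [← Real.log_div (by positivity) (by positivity)]
    congr 1
    field_simp
  rw [tendsto_congr' h]
  have hlim : Tendsto (fun t : ℝ => (1/t+1)/(x/t+1)) atTop (𝓝 1) := by
    have h1 : Tendsto (fun t : ℝ => 1/t+1) atTop (𝓝 1) := by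
      have := (tendsto_inv_atTop_zero : Tendsto (fun t:ℝ => t⁻¹) atTop (𝓝 0)).add_const 1
      simpa [one_div] using this
    have h2 : Tendsto (fun t : ℝ => x/t+1) atTop (𝓝 1) := by
      have : Tendsto (fun t : ℝ => x/t) atTop (𝓝 0) := by
        have := (tendsto_inv_atTop_zero : Tendsto (fun t:ℝ => t⁻¹) atTop (𝓝 0)).const_mul x
        simpa [div_eq_mul_inv] using this
      simpa using this.add_const 1
    simpa [Pi.div_def] using h1.div h2 (by norm_num)
  have := (Real.continuousAt_log (by norm_num : (1:ℝ) ≠ 0)).tendsto.comp hlim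
  simpa [Function.comp_def] using this

lemma logrep_int (x : ℝ) (hx : 0 < x) :
    ∫ t in Ioi (0:ℝ), (x-1)/((1+t)*(x+t)) = Real.log x := by
  rcases le_or_gt 1 x with hx1 | hx1
  · have := integral_Ioi_of_hasDerivAt_of_nonneg' (logrep_deriv x hx)
      (fun t ht => by
        have : (0:ℝ) < t := ht
        have h1 : (0:ℝ) < 1 + t := by linarith
        have h2 : (0:ℝ) < x + t := by linarith
        apply div_nonneg (by linarith) (by positivity))
      (logrep_tendsto x hx)
    rw [this]
    simp [Real.log_one]
  · have := integral_Ioi_of_hasDerivAt_of_nonpos' (logrep_deriv x hx)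
      (fun t ht => by
        have : (0:ℝ) < t := ht
        have h1 : (0:ℝ) < 1 + t := by linarith
        have h2 : (0:ℝ) < x + t := by linarith
        apply div_nonpos_of_nonpos_of_nonneg <;> nlinarith)
      (logrep_tendsto x hx)
    rw [this]
    simp [Real.log_one]

lemma logrep_integrable (x : ℝ) (hx : 0 < x) :
    IntegrableOn (fun t => (x-1)/((1+t)*(x+t))) (Ioi (0:ℝ)) := by
  rcases le_or_gt 1 x with hx1 | hx1
  · exact integrableOn_Ioi_deriv_of_nonneg' (logrep_deriv x hx)
      (fun t ht => by
        have : (0:ℝ) < t := ht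
        have h1 : (0:ℝ) < 1 + t := by linarith
        have h2 : (0:ℝ) < x + t := by linarith
        apply div_nonneg (by linarith) (by positivity))
      (logrep_tendsto x hx)
  · exact integrableOn_Ioi_deriv_of_nonpos' (logrep_deriv x hx)
      (fun t ht => by
        have : (0:ℝ) < t := ht
        have h1 : (0:ℝ) < 1 + t := by linarith
        have h2 : (0:ℝ) < x + t := by linarith
        apply div_nonpos_of_nonpos_of_nonneg <;> nlinarith)
      (logrep_tendsto x hx)

lemma logrep_abs_int (x : ℝ) (hx : 0 < x) :
    ∫ t in Ioi (0:ℝ), |(x-1)/((1+t)*(x+t))| = |Real.log x| := by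
  rcases le_or_gt 1 x with hx1 | hx1
  · rw [abs_of_nonneg (Real.log_nonneg hx1), ← logrep_int x hx]
    apply setIntegral_congr_fun measurableSet_Ioi
    intro t ht
    have : (0:ℝ) < t := ht
    have h1 : (0:ℝ) < 1 + t := by linarith
    have h2 : (0:ℝ) < x + t := by linarith
    apply abs_of_nonneg
    apply div_nonneg (by linarith) (by positivity)
  · rw [abs_of_nonpos (Real.log_nonpos hx.le hx1.le), ← logrep_int x hx, ← integral_neg]
    apply setIntegral_congr_fun measurableSet_Ioi
    intro t ht
    have : (0:ℝ) < t := ht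
    have h1 : (0:ℝ) < 1 + t := by linarith
    have h2 : (0:ℝ) < x + t := by linarith
    apply abs_of_nonpos
    apply div_nonpos_of_nonpos_of_nonneg <;> nlinarith

noncomputable def G2 : ℝ → ℝ := fun t =>
  2*Real.log (1+t) - (t+2)^2/2 + (t+2)*Real.sqrt (t*(t+4))/2
    - 2*Real.log (t+2+Real.sqrt (t*(t+4)))

lemma G2_deriv (t : ℝ) (ht : t ∈ Ioi (0:ℝ)) :
    HasDerivAt G2 (2/(1+t) - (t+2) + Real.sqrt (t*(t+4))) t := by
  have ht0 : (0:ℝ) < t := ht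
  have harg : (0:ℝ) < t*(t+4) := by nlinarith
  set r := Real.sqrt (t*(t+4)) with hrdef
  have hrpos : 0 < r := Real.sqrt_pos.2 harg
  have hr2 : r^2 = t*(t+4) := Real.sq_sqrt harg.le
  have h1t : (0:ℝ) < 1 + t := by linarith
  have hd1 : HasDerivAt (fun u : ℝ => 2*Real.log (1+u)) (2*(1/(1+t))) t := by
    have := ((Real.hasDerivAt_log h1t.ne').comp t ((hasDerivAt_id t).const_add 1)).const_mul 2
    simpa using this
  have hd2 : HasDerivAt (fun u : ℝ => (u+2)^2/2) (t+2) t := by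
    have := (((hasDerivAt_id t).add_const 2).pow 2).div_const 2
    convert this using 1 <;> try rfl
    simp [id]
  have hdr : HasDerivAt (fun u : ℝ => Real.sqrt (u*(u+4))) ((2*t+4)/(2*r)) t := by
    have hin : HasDerivAt (fun u : ℝ => u*(u+4)) (2*t+4) t := by
      have := (hasDerivAt_id t).mul ((hasDerivAt_id t).add_const 4)
      convert this using 1 <;> try rfl
      simp [id]
      ring
    have := (Real.hasDerivAt_sqrt harg.ne').comp t hin
    convert this using 1 <;> try rfl
    rw [← hrdef]
    ring
  have hd3 : HasDerivAt (fun u : ℝ => (u+2)*Real.sqrt (u*(u+4))/2)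
      ((1*r + (t+2)*((2*t+4)/(2*r)))/2) t :=
    (((hasDerivAt_id t).add_const 2).mul hdr).div_const 2
  have hd4 : HasDerivAt (fun u : ℝ => 2*Real.log (u+2+Real.sqrt (u*(u+4))))
      (2*((1+(2*t+4)/(2*r))/(t+2+r))) t := by
    have hin : HasDerivAt (fun u : ℝ => u+2+Real.sqrt (u*(u+4))) (1+(2*t+4)/(2*r)) t :=
      ((hasDerivAt_id t).add_const 2).add hdr
    have hne : t+2+r ≠ 0 := by positivity
    have := ((Real.hasDerivAt_log hne).comp t hin).const_mul 2
    convert this using 1 <;> try rfl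
    ring
  have htot := ((hd1.sub hd2).add hd3).sub hd4
  convert htot using 1 <;> try rfl
  field_simp
  linear_combination 2*(1+t)*(t+2+r) * hr2

lemma G2_deriv_nonneg (t : ℝ) (ht : t ∈ Ioi (0:ℝ)) :
    0 ≤ 2/(1+t) - (t+2) + Real.sqrt (t*(t+4)) := by
  have ht0 : (0:ℝ) < t := ht
  have h1t : (0:ℝ) < 1 + t := by linarith
  have hq : (t^2+3*t)/(1+t) ≤ Real.sqrt (t*(t+4)) := by
    rw [Real.le_sqrt (by positivity) (by positivity)]
    rw [div_pow, div_le_iff₀ (by positivity)]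
    nlinarith
  have he : 2/(1+t) + (t^2+3*t)/(1+t) = t+2 := by
    field_simp
    ring
  linarith

lemma G2_cont : ContinuousWithinAt G2 (Ici (0:ℝ)) 0 := by
  apply ContinuousAt.continuousWithinAt
  have hsq : Continuous (fun t : ℝ => Real.sqrt (t*(t+4))) :=
    Real.continuous_sqrt.comp (continuous_id.mul (continuous_id.add continuous_const))
  have h1 : ContinuousAt (fun t : ℝ => 2*Real.log (1+t)) 0 := by
    have hl : ContinuousAt (fun t : ℝ => Real.log (1+t)) 0 :=
      (Real.continuousAt_log (by norm_num : (1:ℝ)+0 ≠ 0)).comp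
        ((continuous_const.add continuous_id).continuousAt (x := (0:ℝ)))
    exact continuousAt_const.mul hl
  have h4 : ContinuousAt (fun t : ℝ => 2*Real.log (t+2+Real.sqrt (t*(t+4)))) 0 := by
    have hl : ContinuousAt (fun t : ℝ => Real.log (t+2+Real.sqrt (t*(t+4)))) 0 := by
      apply (Real.continuousAt_log ?_).comp
        (((continuous_id.add continuous_const).add hsq).continuousAt (x := (0:ℝ)))
      norm_num
    exact continuousAt_const.mul hl
  exact ((h1.sub ((continuous_pow 2 |>.comp (continuous_id.add continuous_const)).continuousAt.div_const 2)).add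
    (((continuous_id.add continuous_const).mul hsq).continuousAt.div_const 2)).sub h4

lemma G2_lim : Tendsto G2 atTop (𝓝 (-1 - 2*Real.log 2)) := by
  have hsq1 : Tendsto (fun t : ℝ => Real.sqrt (1+4/t)) atTop (𝓝 1) := by
    have hin : Tendsto (fun t : ℝ => 1+4/t) atTop (𝓝 1) := by
      have := (tendsto_inv_atTop_zero : Tendsto (fun t:ℝ => t⁻¹) atTop (𝓝 0)).const_mul 4
      have h2 : Tendsto (fun t : ℝ => 4/t) atTop (𝓝 0) := by
        simpa [div_eq_mul_inv] using this
      simpa using (h2.const_add 1)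
    have := (Real.continuous_sqrt.continuousAt (x := (1:ℝ))).tendsto.comp hin
    simpa [Function.comp_def] using this
  have h2t : Tendsto (fun t : ℝ => 2/t) atTop (𝓝 0) := by
    have := (tendsto_inv_atTop_zero : Tendsto (fun t:ℝ => t⁻¹) atTop (𝓝 0)).const_mul 2
    simpa [div_eq_mul_inv] using this
  have h1t : Tendsto (fun t : ℝ => 1/t) atTop (𝓝 0) := by
    simpa [one_div] using (tendsto_inv_atTop_zero : Tendsto (fun t:ℝ => t⁻¹) atTop (𝓝 0))
  have hA : Tendsto (fun t : ℝ => 2*Real.log ((1/t+1)/(1+2/t+Real.sqrt (1+4/t)))) atTop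
      (𝓝 (-2*Real.log 2)) := by
    have hfrac : Tendsto (fun t : ℝ => (1/t+1)/(1+2/t+Real.sqrt (1+4/t))) atTop (𝓝 (1/2)) := by
      have hnum : Tendsto (fun t : ℝ => 1/t+1) atTop (𝓝 1) := by simpa using h1t.add_const 1
      have hden : Tendsto (fun t : ℝ => 1+2/t+Real.sqrt (1+4/t)) atTop (𝓝 2) := by
        have := ((h2t.const_add 1).add hsq1)
        norm_num at this
        exact this
      have := hnum.div hden (by norm_num)
      norm_num at this
      exact Filter.Tendsto.congr (fun x => by simp only [Pi.div_apply, one_div]) this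
    have := ((Real.continuousAt_log (by norm_num : (1:ℝ)/2 ≠ 0)).tendsto.comp hfrac).const_mul 2
    rw [show Real.log (1/2) = -Real.log 2 by rw [one_div, Real.log_inv]] at this
    simp only [Function.comp_def] at this
    convert this using 2
    ring
  have hB : Tendsto (fun t : ℝ => -2*(1+2/t)/(Real.sqrt (1+4/t)+1+2/t)) atTop (𝓝 (-1)) := by
    have hnum : Tendsto (fun t : ℝ => -2*(1+2/t)) atTop (𝓝 (-2)) := by
      have := (h2t.const_add 1).const_mul (-2)
      simp only [add_zero, mul_one] at this
      exact Filter.Tendsto.congr (fun x => by ring) this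
    have hden : Tendsto (fun t : ℝ => Real.sqrt (1+4/t)+1+2/t) atTop (𝓝 2) := by
      have := (hsq1.add_const 1).add h2t
      norm_num at this
      exact this
    have := hnum.div hden (by norm_num)
    norm_num at this
    exact Filter.Tendsto.congr (fun x => by simp only [Pi.div_apply]; ring) this
  have key : G2 =ᶠ[atTop] fun t =>
      2*Real.log ((1/t+1)/(1+2/t+Real.sqrt (1+4/t))) + -2*(1+2/t)/(Real.sqrt (1+4/t)+1+2/t) := by
    filter_upwards [eventually_gt_atTop 0] with t ht0
    have harg : (0:ℝ) < t*(t+4) := by nlinarith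
    set r := Real.sqrt (t*(t+4)) with hrdef
    have hrpos : 0 < r := Real.sqrt_pos.2 harg
    have hr2 : r^2 = t*(t+4) := Real.sq_sqrt harg.le
    have hrt : r = t*Real.sqrt (1+4/t) := by
      rw [hrdef, show t*(t+4) = t^2*(1+4/t) by field_simp, Real.sqrt_mul (by positivity),
        Real.sqrt_sq ht0.le]
    have hs1pos : 0 < Real.sqrt (1+4/t) := Real.sqrt_pos.2 (by positivity)
    have e1 : Real.log (1+t) - Real.log (t+2+r)
        = Real.log ((1/t+1)/(1+2/t+Real.sqrt (1+4/t))) := by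
      rw [← Real.log_div (by positivity) (by positivity)]
      congr 1
      rw [hrt]
      field_simp
    have e2 : (t+2)*r/2 - (t+2)^2/2 = -2*(1+2/t)/(Real.sqrt (1+4/t)+1+2/t) := by
      have hfac : (r-(t+2))*(r+(t+2)) = -4 := by
        have : r^2 - (t+2)^2 = -4 := by rw [hr2]; ring
        nlinarith [this]
      have hrtpos : 0 < r + (t+2) := by linarith
      have hrsub : r - (t+2) = -4/(r+(t+2)) := by
        field_simp
        linarith [hfac]
      have : (t+2)*r/2 - (t+2)^2/2 = (t+2)*(r-(t+2))/2 := by ring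
      rw [this, hrsub, hrt]
      rw [div_eq_div_iff (by positivity) (by positivity)]
      field_simp
      ring
    show 2*Real.log (1+t) - (t+2)^2/2 + (t+2)*r/2 - 2*Real.log (t+2+r) = _
    rw [← e1, ← e2]
    ring
  rw [tendsto_congr' key]
  have := hA.add hB
  convert this using 2
  ring

lemma outer_int : ∫ t in Ioi (0:ℝ), (2/(1+t) - (t+2) + Real.sqrt (t*(t+4))) = 1 := by
  have := integral_Ioi_of_hasDerivAt_of_nonneg G2_cont G2_deriv G2_deriv_nonneg G2_lim
  rw [this]
  have : G2 0 = -2 - 2*Real.log 2 := by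
    simp [G2, Real.log_one]
    norm_num
  rw [this]
  ring

lemma sqrt4' : Real.sqrt 4 = 2 := by
  rw [show (4:ℝ) = 2^2 by norm_num, Real.sqrt_sq (by norm_num)]

lemma bound_lem (x : ℝ) (hx : x ∈ Ioo (0:ℝ) 4) :
    Real.sqrt (x*(4-x)) * |Real.log x| ≤ 6 := by
  obtain ⟨h0, h4⟩ := hx
  have hsx : 0 < Real.sqrt x := Real.sqrt_pos.2 h0
  rcases le_or_gt x 1 with hx1 | hx1
  · have h1 : Real.sqrt (x*(4-x)) ≤ 2*Real.sqrt x := by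
      rw [show (2:ℝ)*Real.sqrt x = Real.sqrt (4*x) by
        rw [Real.sqrt_mul (by norm_num) x, sqrt4']]
      exact Real.sqrt_le_sqrt (by nlinarith)
    have h2 : |Real.log x| ≤ 2/Real.sqrt x := by
      rw [abs_of_nonpos (Real.log_nonpos h0.le hx1)]
      have hls : Real.log x = 2 * Real.log (Real.sqrt x) := by
        rw [Real.log_sqrt h0.le]; ring
      have := Real.log_le_sub_one_of_pos (show (0:ℝ) < (Real.sqrt x)⁻¹ by positivity)
      rw [Real.log_inv] at this
      have h3 : -Real.log (Real.sqrt x) ≤ (Real.sqrt x)⁻¹ := by linarith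
      rw [hls]
      calc -(2*Real.log (Real.sqrt x)) = 2*(-Real.log (Real.sqrt x)) := by ring
        _ ≤ 2*(Real.sqrt x)⁻¹ := by linarith
        _ = 2/Real.sqrt x := by rw [div_eq_mul_inv]
    calc Real.sqrt (x*(4-x)) * |Real.log x| ≤ (2*Real.sqrt x) * (2/Real.sqrt x) := by
          apply mul_le_mul h1 h2 (abs_nonneg _) (by positivity)
      _ = 4 := by field_simp; ring
      _ ≤ 6 := by norm_num
  · have h1 : Real.sqrt (x*(4-x)) ≤ 2 := by
      rw [show (2:ℝ) = Real.sqrt 4 from sqrt4'.symm]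
      exact Real.sqrt_le_sqrt (by nlinarith [sq_nonneg (x-2)])
    have h2 : |Real.log x| ≤ 3 := by
      rw [abs_of_nonneg (Real.log_nonneg hx1.le)]
      linarith [Real.log_le_sub_one_of_pos h0]
    calc Real.sqrt (x*(4-x)) * |Real.log x| ≤ 2*3 := by
          apply mul_le_mul h1 h2 (abs_nonneg _) (by norm_num)
      _ = 6 := by norm_num

noncomputable def fMP (x t : ℝ) : ℝ := Real.sqrt (x*(4-x)) * ((x-1)/((1+t)*(x+t)))

set_option maxHeartbeats 1000000 in
lemma T_eq_pi :
    ∫ x in Ioo (0:ℝ) 4, Real.sqrt (x*(4-x)) * Real.log x = π := by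
  have hmeas : AEStronglyMeasurable (Function.uncurry fMP)
      ((volume.restrict (Ioo (0:ℝ) 4)).prod (volume.restrict (Ioi (0:ℝ)))) := by
    apply Measurable.aestronglyMeasurable
    have : Function.uncurry fMP = fun p : ℝ × ℝ =>
        Real.sqrt (p.1*(4-p.1)) * ((p.1-1)/((1+p.2)*(p.1+p.2))) := rfl
    rw [this]
    exact ((measurable_fst.mul (measurable_const.sub measurable_fst)).sqrt).mul
      ((measurable_fst.sub measurable_const).div
        ((measurable_const.add measurable_snd).mul (measurable_fst.add measurable_snd)))
  have hxmem : ∀ᵐ x ∂(volume.restrict (Ioo (0:ℝ) 4)), x ∈ Ioo (0:ℝ) 4 :=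
    ae_restrict_mem measurableSet_Ioo
  have hnorm_eq : ∀ x ∈ Ioo (0:ℝ) 4,
      ∫ t in Ioi (0:ℝ), ‖fMP x t‖ = Real.sqrt (x*(4-x)) * |Real.log x| := by
    intro x hx
    have h0 : 0 < x := hx.1
    have heq : (fun t => ‖fMP x t‖) = fun t => Real.sqrt (x*(4-x)) * |(x-1)/((1+t)*(x+t))| := by
      funext t
      rw [show fMP x t = Real.sqrt (x*(4-x)) * ((x-1)/((1+t)*(x+t))) from rfl,
        Real.norm_eq_abs, abs_mul, abs_of_nonneg (Real.sqrt_nonneg _)]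
    rw [heq, integral_const_mul, logrep_abs_int x h0]
  have hInt : Integrable (Function.uncurry fMP)
      ((volume.restrict (Ioo (0:ℝ) 4)).prod (volume.restrict (Ioi (0:ℝ)))) := by
    rw [integrable_prod_iff hmeas]
    constructor
    · filter_upwards [hxmem] with x hx
      have h0 : 0 < x := hx.1
      have := (logrep_integrable x h0).const_mul (Real.sqrt (x*(4-x)))
      exact this
    · apply Integrable.mono' (g := fun _ : ℝ => (6:ℝ))
      · rw [integrable_const_iff]
        right
        infer_instance
      · exact hmeas.norm.integral_prod_right'
      · filter_upwards [hxmem] with x hx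
        simp only [Function.uncurry_apply_pair]
        rw [Real.norm_eq_abs, hnorm_eq x hx, abs_of_nonneg (by positivity)]
        exact bound_lem x hx
  have hswap := integral_integral_swap hInt
  have hleft : ∫ x in Ioo (0:ℝ) 4, ∫ t in Ioi (0:ℝ), fMP x t
      = ∫ x in Ioo (0:ℝ) 4, Real.sqrt (x*(4-x)) * Real.log x := by
    apply setIntegral_congr_fun measurableSet_Ioo
    intro x hx
    have h0 : 0 < x := hx.1
    show ∫ t in Ioi (0:ℝ), Real.sqrt (x*(4-x)) * ((x-1)/((1+t)*(x+t))) = _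
    rw [integral_const_mul, logrep_int x h0]
  have hright : ∫ t in Ioi (0:ℝ), ∫ x in Ioo (0:ℝ) 4, fMP x t = π := by
    have hinner : ∀ t ∈ Ioi (0:ℝ),
        ∫ x in Ioo (0:ℝ) 4, fMP x t = π * (2/(1+t) - (t+2) + Real.sqrt (t*(t+4))) := by
      intro t ht
      have ht0 : 0 < t := ht
      have := inner_int t ht0
      rw [intervalIntegral.integral_of_le (by norm_num), integral_Ioc_eq_integral_Ioo] at this
      rw [show (∫ x in Ioo (0:ℝ) 4, fMP x t)
        = ∫ x in Ioo (0:ℝ) 4, Real.sqrt (x*(4-x)) * ((x-1)/((1+t)*(x+t))) from rfl, this]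
      field_simp
    rw [setIntegral_congr_fun measurableSet_Ioi hinner, integral_const_mul, outer_int]
    ring
  rw [← hleft, hswap, hright]

/-- The average entropy of the Marchenko–Pastur distribution equals `-1/2`. -/
theorem MP_mean_entropy :
    ∫ x in Set.Ioo (0:ℝ) 4,
      (-x * Real.log x) * ((1 / (2 * π)) * Real.sqrt (4 / x - 1)) = -(1 / 2) := by
  have hrw : ∀ x ∈ Ioo (0:ℝ) 4,
      (-x * Real.log x) * ((1 / (2 * π)) * Real.sqrt (4 / x - 1))
        = (-(1/(2*π))) * (Real.sqrt (x*(4-x)) * Real.log x) := by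
    intro x hx
    have h0 : 0 < x := hx.1
    have hs : Real.sqrt (4/x - 1) = Real.sqrt (x*(4-x))/x := by
      rw [show 4/x - 1 = (x*(4-x))/x^2 by field_simp,
        Real.sqrt_div (by nlinarith [hx.2]) (x^2), Real.sqrt_sq h0.le]
    rw [hs]
    field_simp
  rw [setIntegral_congr_fun measurableSet_Ioo hrw, integral_const_mul, T_eq_pi]
  field_simp
end

section
/- The density π⁽²⁾(x) = (∛2·√3)/(12π) · [∛2 (27 + 3√(81−12x))^{2/3} − 6 x^{1/3}] / [x^{2/3} (27 + 3√(81−12x))^{1/3}] on (0, 27/4) integrates to 1. -/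
open Real MeasureTheory Set Filter Topology

noncomputable def fcG (t : ℝ) : ℝ :=
  -2 / (3 * (1 + t)) + (2 - t) / (3 * (t ^ 2 - t + 1))
    + Real.arctan ((2 * t - 1) / Real.sqrt 3) / Real.sqrt 3

noncomputable def fcQ (x : ℝ) : ℝ :=
  ((27 - 3 * Real.sqrt (81 - 12 * x)) / (27 + 3 * Real.sqrt (81 - 12 * x))) ^ ((1:ℝ)/3)

noncomputable def fcPhi (x : ℝ) : ℝ := (3 * Real.sqrt 3 / π) * fcG (fcQ x) + 1/2

lemma sqrt3_pos : (0:ℝ) < Real.sqrt 3 := Real.sqrt_pos.mpr (by norm_num)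

lemma sq_sqrt3 : (Real.sqrt 3) ^ 2 = 3 := Real.sq_sqrt (by norm_num)

lemma sqrt3_mul_self : Real.sqrt 3 * Real.sqrt 3 = 3 := Real.mul_self_sqrt (by norm_num)

lemma fcG_hasDerivAt {t : ℝ} (ht : -1 < t) :
    HasDerivAt fcG ((3/2) * (1 - t) * (1 - t ^ 3) / (1 + t ^ 3) ^ 2) t := by
  have h1 : (0:ℝ) < 1 + t := by linarith
  have h2 : (0:ℝ) < t ^ 2 - t + 1 := by nlinarith [sq_nonneg (t - 1), sq_nonneg t]
  have h3 : (0:ℝ) < 1 + t ^ 3 := by nlinarith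
  have d1 : HasDerivAt (fun t : ℝ => -2 / (3 * (1 + t)))
      ((0 * (3 * (1 + t)) - (-2) * (3 * 1)) / (3 * (1 + t)) ^ 2) t :=
    (hasDerivAt_const t (-2)).div (((hasDerivAt_id t).const_add 1).const_mul 3)
      (by positivity)
  have d2 : HasDerivAt (fun t : ℝ => (2 - t) / (3 * (t ^ 2 - t + 1)))
      (((-1) * (3 * (t ^ 2 - t + 1)) - (2 - t) * (3 * (2 * t - 1))) /
        (3 * (t ^ 2 - t + 1)) ^ 2) t := by
    have hn : HasDerivAt (fun t : ℝ => 2 - t) (-1) t := by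
      simpa using (hasDerivAt_id t).const_sub 2
    have hd : HasDerivAt (fun t : ℝ => 3 * (t ^ 2 - t + 1)) (3 * (2 * t - 1)) t := by
      have := (((hasDerivAt_pow 2 t).sub (hasDerivAt_id t)).add_const 1).const_mul 3
      simpa using this
    exact hn.div hd (by positivity)
  have d3 : HasDerivAt (fun t : ℝ => Real.arctan ((2 * t - 1) / Real.sqrt 3) / Real.sqrt 3)
      (1 / (2 * (t ^ 2 - t + 1))) t := by
    have hin : HasDerivAt (fun t : ℝ => (2 * t - 1) / Real.sqrt 3) (2 * 1 / Real.sqrt 3) t :=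
      (((hasDerivAt_id t).const_mul 2).sub_const 1).div_const _
    have := hin.arctan.div_const (Real.sqrt 3)
    refine this.congr_deriv ?_; symm
    rw [div_pow, sq_sqrt3]
    have h4 : (0:ℝ) < 3 + (2 * t - 1) ^ 2 := by positivity
    have h33 : Real.sqrt 3 * Real.sqrt 3 = 3 := Real.mul_self_sqrt (by norm_num)
    rw [mul_div_assoc, div_div, h33]
    have h4 : (0:ℝ) < 3 + (2 * t - 1) ^ 2 := by positivity
    field_simp [h2.ne', h4.ne']
    rw [div_eq_iff (by nlinarith)]; ring
  have := (d1.add d2).add d3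
  refine this.congr_deriv ?_; symm
  have h2' : t * (t - 1) + 1 ≠ 0 := by nlinarith
  field_simp
  ring

set_option maxHeartbeats 2000000 in
lemma fcPhi_hasDerivAt {x : ℝ} (hx : x ∈ Set.Ioo (0:ℝ) (27/4)) :
    HasDerivAt fcPhi
      (((2:ℝ) ^ ((1:ℝ)/3) * Real.sqrt 3) / (12 * π) *
        (((2:ℝ) ^ ((1:ℝ)/3) * (27 + 3 * Real.sqrt (81 - 12 * x)) ^ ((2:ℝ)/3)
          - 6 * x ^ ((1:ℝ)/3))
          / (x ^ ((2:ℝ)/3) * (27 + 3 * Real.sqrt (81 - 12 * x)) ^ ((1:ℝ)/3)))) x := by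
  obtain ⟨hx0, hx1⟩ := hx
  set s := Real.sqrt (81 - 12 * x) with hs_def
  have hpos : (0:ℝ) < 81 - 12 * x := by linarith
  have hs_pos : 0 < s := Real.sqrt_pos.mpr hpos
  have hs2 : s ^ 2 = 81 - 12 * x := Real.sq_sqrt hpos.le
  have hs9 : s < 9 := by nlinarith [hs2]
  have hA_pos : (0:ℝ) < 27 + 3 * s := by linarith
  have hB_pos : (0:ℝ) < 27 - 3 * s := by linarith
  have hw_pos : (0:ℝ) < (27 - 3 * s) / (27 + 3 * s) := by positivity
  have hq_pos : 0 < fcQ x := Real.rpow_pos_of_pos hw_pos _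
  set q := fcQ x with hq_def
  set a := (27 + 3 * s) ^ ((1:ℝ)/3) with ha_def
  set c := (2:ℝ) ^ ((1:ℝ)/3) with hc_def
  set d := (108:ℝ) ^ ((1:ℝ)/3) with hd_def
  have ha_pos : 0 < a := Real.rpow_pos_of_pos hA_pos _
  have hc_pos : (0:ℝ) < c := Real.rpow_pos_of_pos (by norm_num) _
  have hd_pos : (0:ℝ) < d := Real.rpow_pos_of_pos (by norm_num) _
  -- algebraic relations
  have ha3 : a ^ 3 = 27 + 3 * s := by
    rw [ha_def, ← Real.rpow_natCast ((27 + 3*s) ^ ((1:ℝ)/3)) 3, ← Real.rpow_mul hA_pos.le]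
    norm_num
  have hq3 : q ^ 3 = (27 - 3 * s) / (27 + 3 * s) := by
    rw [hq_def, fcQ, ← hs_def,
      ← Real.rpow_natCast (((27 - 3*s)/(27 + 3*s)) ^ ((1:ℝ)/3)) 3, ← Real.rpow_mul hw_pos.le]
    norm_num
  have haq3 : a ^ 3 * q ^ 3 = 27 - 3 * s := by
    rw [ha3, hq3]; field_simp
  have hcd : c * d = 6 := by
    rw [hc_def, hd_def, ← Real.mul_rpow (by norm_num) (by norm_num)]
    rw [show (2:ℝ) * 108 = 6 ^ (3:ℝ) by norm_num [show ((3:ℝ)) = ((3:ℕ):ℝ) by norm_num,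
      Real.rpow_natCast]]
    rw [← Real.rpow_mul (by norm_num)]
    norm_num
  have hA23 : (27 + 3 * s) ^ ((2:ℝ)/3) = a ^ 2 := by
    rw [ha_def, show (2:ℝ)/3 = (1:ℝ)/3 * 2 by norm_num, Real.rpow_mul hA_pos.le,
      Real.rpow_two]
  have hxAB : (27 + 3 * s) * (27 - 3 * s) = 108 * x := by nlinarith [hs2]
  have hx_eq : x = (27 + 3 * s) ^ 2 * ((27 - 3 * s) / (27 + 3 * s)) / 108 := by
    rw [eq_div_iff (by norm_num : (108:ℝ) ≠ 0)]
    field_simp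
    linear_combination (-1) * hxAB
  have hx13 : x ^ ((1:ℝ)/3) = a ^ 2 * q / d := by
    rw [hx_eq, Real.div_rpow (by positivity) (by norm_num),
      Real.mul_rpow (by positivity) hw_pos.le]
    rw [← Real.rpow_natCast (27 + 3*s) 2, ← Real.rpow_mul hA_pos.le]
    rw [hq_def, fcQ, ← hs_def, ha_def, hd_def]
    norm_num
    rw [hA23]
    exact Or.inl rfl
  have hx23 : x ^ ((2:ℝ)/3) = (a ^ 2 * q / d) ^ 2 := by
    rw [show (2:ℝ)/3 = (1:ℝ)/3 * 2 by norm_num, Real.rpow_mul hx0.le, Real.rpow_two, hx13]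
  have hqq : ((27 - 3 * s) / (27 + 3 * s)) ^ ((1:ℝ)/3) = q := by
    rw [hq_def, fcQ, ← hs_def]
  have hwpow : ((27 - 3 * s) / (27 + 3 * s)) ^ ((1:ℝ)/3 - 1) = 1 / q ^ 2 := by
    rw [show (1:ℝ)/3 - 1 = (1:ℝ)/3 * (-2) by norm_num, Real.rpow_mul hw_pos.le, hqq]
    rw [show ((-2):ℝ) = -(2:ℝ) by norm_num, Real.rpow_neg hq_pos.le, Real.rpow_two, one_div]
  -- derivatives
  have hds : HasDerivAt (fun y : ℝ => Real.sqrt (81 - 12 * y)) (1 / (2 * s) * (-12)) x := by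
    have hin : HasDerivAt (fun y : ℝ => 81 - 12 * y) (-12) x := by
      simpa using ((hasDerivAt_id x).const_mul (12:ℝ)).const_sub 81
    exact (Real.hasDerivAt_sqrt hpos.ne').comp x hin
  have hdw : HasDerivAt (fun y : ℝ =>
      (27 - 3 * Real.sqrt (81 - 12 * y)) / (27 + 3 * Real.sqrt (81 - 12 * y)))
      (((-3 * (1 / (2 * s) * (-12))) * (27 + 3 * s) - (27 - 3 * s) * (3 * (1 / (2 * s) * (-12))))
        / (27 + 3 * s) ^ 2) x := by
    have hn : HasDerivAt (fun y : ℝ => 27 - 3 * Real.sqrt (81 - 12 * y))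
        (-3 * (1 / (2 * s) * (-12))) x := by
      have := (hds.const_mul (3:ℝ)).const_sub 27
      refine this.congr_deriv ?_; ring
    have hd : HasDerivAt (fun y : ℝ => 27 + 3 * Real.sqrt (81 - 12 * y))
        (3 * (1 / (2 * s) * (-12))) x := by
      simpa using (hds.const_mul (3:ℝ)).const_add 27
    exact hn.div hd hA_pos.ne'
  have hdq : HasDerivAt fcQ
      ((1:ℝ)/3 * ((27 - 3 * s) / (27 + 3 * s)) ^ ((1:ℝ)/3 - 1) *
        (((-3 * (1 / (2 * s) * (-12))) * (27 + 3 * s) - (27 - 3 * s) * (3 * (1 / (2 * s) * (-12))))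
          / (27 + 3 * s) ^ 2)) x := by
    have hr := Real.hasDerivAt_rpow_const (x := (27 - 3 * s) / (27 + 3 * s)) (p := (1:ℝ)/3)
      (Or.inl hw_pos.ne')
    have := hr.comp x hdw
    unfold fcQ
    simpa [Function.comp_def, mul_comm, mul_assoc, mul_left_comm] using this
  have hGq := fcG_hasDerivAt (t := q) (by linarith)
  have hchain := ((hGq.comp x hdq).const_mul (3 * Real.sqrt 3 / π)).add_const (1/2)
  have hphi : HasDerivAt fcPhi
      (3 * Real.sqrt 3 / π * ((3/2) * (1 - q) * (1 - q ^ 3) / (1 + q ^ 3) ^ 2 *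
        ((1:ℝ)/3 * ((27 - 3 * s) / (27 + 3 * s)) ^ ((1:ℝ)/3 - 1) *
          (((-3 * (1 / (2 * s) * (-12))) * (27 + 3 * s)
            - (27 - 3 * s) * (3 * (1 / (2 * s) * (-12)))) / (27 + 3 * s) ^ 2)))) x := by
    unfold fcPhi
    rw [hq_def]
    simpa [Function.comp_def] using hchain
  refine hphi.congr_deriv ?_; symm
  rw [hwpow, hx13, hx23, hA23]
  rw [← ha3, ← haq3]
  have hs_sub : s = (a ^ 3 - a ^ 3 * q ^ 3) / 6 := by linarith [ha3, haq3]
  have h54 : a ^ 3 + a ^ 3 * q ^ 3 = 54 := by linarith [ha3, haq3]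
  have hd_eq : d = 6 / c := by
    rw [eq_div_iff hc_pos.ne']
    linear_combination hcd
  have h1q3 : (0:ℝ) < 1 + q ^ 3 := by positivity
  rw [hs_sub, hd_eq]
  have hq_ne : q ≠ 0 := hq_pos.ne'
  have ha_ne : a ≠ 0 := ha_pos.ne'
  have hc_ne : c ≠ 0 := hc_pos.ne'
  have h1q3_ne : 1 + q ^ 3 ≠ 0 := h1q3.ne'
  have hamq : a ^ 3 - a ^ 3 * q ^ 3 ≠ 0 := by
    have : (0:ℝ) < 6 * s := by linarith
    rw [hs_sub] at this; linarith
  have hpi : π ≠ 0 := Real.pi_ne_zero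
  have hsq3 : Real.sqrt 3 ≠ 0 := sqrt3_pos.ne'
  field_simp
  have h1mq3 : 1 - q ^ 3 ≠ 0 := fun h => hamq (by linear_combination a ^ 3 * h)
  rw [eq_div_iff h1mq3]
  linear_combination (24*(1-q)*(1+q^3)*(1-q^3)) * h54

lemma arctan_sqrt3_inv : Real.arctan (1 / Real.sqrt 3) = π / 6 := by
  apply Real.arctan_eq_of_tan_eq
  · rw [Real.tan_eq_sin_div_cos, Real.sin_pi_div_six, Real.cos_pi_div_six]
    rw [div_eq_div_iff (by positivity) sqrt3_pos.ne']
    nlinarith [sqrt3_mul_self]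
  · constructor <;> nlinarith [Real.pi_pos]

lemma fcG_cont {t : ℝ} (ht : -1 < t) : ContinuousAt fcG t := by
  have h1 : (3 * (1 + t)) ≠ 0 := by nlinarith
  have h2 : (3 * (t ^ 2 - t + 1)) ≠ 0 := by nlinarith [sq_nonneg (t - 1), sq_nonneg t]
  apply ContinuousAt.add
  apply ContinuousAt.add
  · exact continuousAt_const.div (by fun_prop) h1
  · exact (by fun_prop : ContinuousAt (fun t : ℝ => 2 - t) t).div (by fun_prop) h2
  · exact (Real.continuous_arctan.continuousAt.comp (by fun_prop)).div_const _

lemma fcG_zero : fcG 0 = -(π / 6) / Real.sqrt 3 := by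
  unfold fcG
  rw [show (2*(0:ℝ)-1)/Real.sqrt 3 = -(1/Real.sqrt 3) by ring, Real.arctan_neg, arctan_sqrt3_inv]
  norm_num

lemma fcG_one : fcG 1 = (π / 6) / Real.sqrt 3 := by
  unfold fcG
  rw [show (2*(1:ℝ)-1)/Real.sqrt 3 = 1/Real.sqrt 3 by ring, arctan_sqrt3_inv]
  norm_num

-- continuity of fcQ at 0 and 27/4 (within)
lemma fcQ_cont_zero : Tendsto fcQ (𝓝 0) (𝓝 0) := by
  have hw : ContinuousAt (fun x : ℝ =>
      (27 - 3 * Real.sqrt (81 - 12 * x)) / (27 + 3 * Real.sqrt (81 - 12 * x))) 0 := by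
    apply ContinuousAt.div
    · fun_prop
    · fun_prop
    · positivity
  have hw0 : (27 - 3 * Real.sqrt (81 - 12 * (0:ℝ))) / (27 + 3 * Real.sqrt (81 - 12 * (0:ℝ))) = 0 := by
    norm_num
  have hw' : Tendsto (fun x : ℝ =>
      (27 - 3 * Real.sqrt (81 - 12 * x)) / (27 + 3 * Real.sqrt (81 - 12 * x))) (𝓝 0) (𝓝 0) := by
    have := hw.tendsto
    rwa [hw0] at this
  have hr : ContinuousAt (fun t : ℝ => t ^ ((1:ℝ)/3)) 0 :=
    Real.continuousAt_rpow_const _ _ (Or.inr (by norm_num))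
  have := hr.tendsto.comp hw'
  rw [show ((0:ℝ) ^ ((1:ℝ)/3)) = 0 from Real.zero_rpow (by norm_num)] at this
  show Tendsto (fun x : ℝ => ((27 - 3 * Real.sqrt (81 - 12 * x)) / (27 + 3 * Real.sqrt (81 - 12 * x))) ^ ((1:ℝ)/3)) (𝓝 0) (𝓝 0)
  simpa [Function.comp_def] using this

lemma fcQ_cont_top : Tendsto fcQ (𝓝 (27/4)) (𝓝 1) := by
  have hs : Real.sqrt (81 - 12 * (27/4 : ℝ)) = 0 := by norm_num
  have hw : ContinuousAt (fun x : ℝ =>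
      (27 - 3 * Real.sqrt (81 - 12 * x)) / (27 + 3 * Real.sqrt (81 - 12 * x))) (27/4) := by
    apply ContinuousAt.div
    · fun_prop
    · fun_prop
    · positivity
  have hw1 : (27 - 3 * Real.sqrt (81 - 12 * (27/4:ℝ))) / (27 + 3 * Real.sqrt (81 - 12 * (27/4:ℝ))) = 1 := by
    rw [hs]; norm_num
  have hw' : Tendsto (fun x : ℝ =>
      (27 - 3 * Real.sqrt (81 - 12 * x)) / (27 + 3 * Real.sqrt (81 - 12 * x))) (𝓝 (27/4)) (𝓝 1) := by
    have := hw.tendsto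
    rwa [hw1] at this
  have hr : ContinuousAt (fun t : ℝ => t ^ ((1:ℝ)/3)) 1 :=
    Real.continuousAt_rpow_const _ _ (Or.inl (by norm_num))
  have := hr.tendsto.comp hw'
  rw [show ((1:ℝ) ^ ((1:ℝ)/3)) = 1 from Real.one_rpow _] at this
  show Tendsto (fun x : ℝ => ((27 - 3 * Real.sqrt (81 - 12 * x)) / (27 + 3 * Real.sqrt (81 - 12 * x))) ^ ((1:ℝ)/3)) (𝓝 (27/4)) (𝓝 1)
  simpa [Function.comp_def] using this

lemma fcPhi_tendsto_zero : Tendsto fcPhi (nhdsWithin 0 (Set.Ioi 0)) (𝓝 0) := by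
  have h1 : Tendsto fcPhi (𝓝 0) (𝓝 (3 * Real.sqrt 3 / π * fcG 0 + 1/2)) := by
    exact (((fcG_cont (by norm_num)).tendsto.comp fcQ_cont_zero).const_mul _).add_const _
  have h2 : 3 * Real.sqrt 3 / π * fcG 0 + 1/2 = 0 := by
    rw [fcG_zero]
    field_simp
    nlinarith [sqrt3_mul_self, Real.pi_pos]
  have := h1.mono_left (nhdsWithin_le_nhds (s := Set.Ioi (0:ℝ)))
  rwa [h2] at this

lemma fcPhi_tendsto_one : Tendsto fcPhi (nhdsWithin (27/4 : ℝ) (Set.Iio (27/4))) (𝓝 1) := by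
  have h1 : Tendsto fcPhi (𝓝 (27/4)) (𝓝 (3 * Real.sqrt 3 / π * fcG 1 + 1/2)) := by
    exact (((fcG_cont (by norm_num)).tendsto.comp fcQ_cont_top).const_mul _).add_const _
  have h2 : 3 * Real.sqrt 3 / π * fcG 1 + 1/2 = 1 := by
    rw [fcG_one]
    field_simp
    nlinarith [sqrt3_mul_self, Real.pi_pos]
  have := h1.mono_left (nhdsWithin_le_nhds (s := Set.Iio (27/4:ℝ)))
  rwa [h2] at this

lemma rpow_27 : (27:ℝ) ^ ((1:ℝ)/3) = 3 := by
  rw [show (27:ℝ) = 3 ^ (3:ℝ) by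
    rw [show (3:ℝ) = ((3:ℕ):ℝ) by norm_num, Real.rpow_natCast]; norm_num]
  rw [← Real.rpow_mul (by norm_num)]
  norm_num

lemma rpow_8 : (8:ℝ) ^ ((1:ℝ)/3) = 2 := by
  rw [show (8:ℝ) = 2 ^ (3:ℝ) by
    rw [show (3:ℝ) = ((3:ℕ):ℝ) by norm_num, Real.rpow_natCast]; norm_num]
  rw [← Real.rpow_mul (by norm_num)]
  norm_num

lemma fc_integrable : IntervalIntegrable (fun x : ℝ =>
    ((2:ℝ) ^ ((1:ℝ)/3) * Real.sqrt 3) / (12 * π) *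
      (((2:ℝ) ^ ((1:ℝ)/3) * (27 + 3 * Real.sqrt (81 - 12 * x)) ^ ((2:ℝ)/3)
        - 6 * x ^ ((1:ℝ)/3))
        / (x ^ ((2:ℝ)/3) * (27 + 3 * Real.sqrt (81 - 12 * x)) ^ ((1:ℝ)/3))))
    volume 0 (27/4) := by
  rw [intervalIntegrable_iff_integrableOn_Ioc_of_le (by norm_num)]
  have hg : IntegrableOn (fun x : ℝ => 5 * x ^ (-(2:ℝ)/3)) (Set.Ioc 0 (27/4)) volume := by
    have h := (intervalIntegral.intervalIntegrable_rpow' (r := -(2:ℝ)/3)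
      (by norm_num) (a := 0) (b := 27/4)).const_mul (5:ℝ)
    rwa [intervalIntegrable_iff_integrableOn_Ioc_of_le (by norm_num)] at h
  apply hg.mono'
  · -- measurability
    apply ContinuousOn.aestronglyMeasurable _ measurableSet_Ioc
    intro x hx
    apply ContinuousAt.continuousWithinAt
    have hx0 : x ≠ 0 := ne_of_gt hx.1
    have hA : ContinuousAt (fun y : ℝ => 27 + 3 * Real.sqrt (81 - 12 * y)) x := by fun_prop
    have hden : x ^ ((2:ℝ)/3) * (27 + 3 * Real.sqrt (81 - 12 * x)) ^ ((1:ℝ)/3) ≠ 0 := by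
      have h1 : (0:ℝ) < x ^ ((2:ℝ)/3) := Real.rpow_pos_of_pos hx.1 _
      have h2 : (0:ℝ) < (27 + 3 * Real.sqrt (81 - 12 * x)) ^ ((1:ℝ)/3) :=
        Real.rpow_pos_of_pos (by positivity) _
      positivity
    apply ContinuousAt.mul continuousAt_const
    apply ContinuousAt.div
    · exact (continuousAt_const.mul (hA.rpow_const (Or.inr (by norm_num)))).sub
        (continuousAt_const.mul (continuousAt_id.rpow_const (Or.inr (by norm_num))))
    · exact (continuousAt_id.rpow_const (Or.inr (by norm_num))).mul
        (hA.rpow_const (Or.inr (by norm_num)))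
    · exact hden
  · -- bound
    rw [ae_restrict_iff' measurableSet_Ioc]
    refine ae_of_all _ fun x hx => ?_
    obtain ⟨hx0, hx1⟩ := hx
    set s := Real.sqrt (81 - 12 * x) with hs_def
    have hs_nonneg : 0 ≤ s := Real.sqrt_nonneg _
    have hs9 : s ≤ 9 := by
      rw [hs_def, show (9:ℝ) = Real.sqrt 81 by
        rw [show (81:ℝ) = 9^2 by norm_num, Real.sqrt_sq]; norm_num]
      exact Real.sqrt_le_sqrt (by linarith)
    have hA1 : (27:ℝ) ≤ 27 + 3 * s := by linarith
    have hA2 : 27 + 3 * s ≤ 54 := by linarith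
    have hx23_pos : (0:ℝ) < x ^ ((2:ℝ)/3) := Real.rpow_pos_of_pos hx0 _
    have hA13 : (3:ℝ) ≤ (27 + 3 * s) ^ ((1:ℝ)/3) := by
      have h := Real.rpow_le_rpow (by norm_num : (0:ℝ) ≤ 27) hA1 (by norm_num : (0:ℝ) ≤ (1:ℝ)/3)
      rwa [rpow_27] at h
    have hA23 : (27 + 3 * s) ^ ((2:ℝ)/3) ≤ 54 := by
      calc (27 + 3 * s) ^ ((2:ℝ)/3) ≤ (54:ℝ) ^ ((2:ℝ)/3) :=
            Real.rpow_le_rpow (by linarith) hA2 (by norm_num)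
        _ ≤ (54:ℝ) ^ (1:ℝ) := Real.rpow_le_rpow_of_exponent_le (by norm_num) (by norm_num)
        _ = 54 := Real.rpow_one _
    have hc2 : (2:ℝ) ^ ((1:ℝ)/3) ≤ 2 := by
      calc (2:ℝ) ^ ((1:ℝ)/3) ≤ (2:ℝ) ^ (1:ℝ) :=
            Real.rpow_le_rpow_of_exponent_le (by norm_num) (by norm_num)
        _ = 2 := Real.rpow_one _
    have hc0 : (0:ℝ) ≤ (2:ℝ) ^ ((1:ℝ)/3) := (Real.rpow_pos_of_pos (by norm_num) _).le
    have hx13 : x ^ ((1:ℝ)/3) ≤ 2 := by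
      have h := Real.rpow_le_rpow hx0.le (by linarith : x ≤ 8) (by norm_num : (0:ℝ) ≤ (1:ℝ)/3)
      rwa [rpow_8] at h
    have hx13_0 : (0:ℝ) ≤ x ^ ((1:ℝ)/3) := (Real.rpow_pos_of_pos hx0 _).le
    have hnum : |(2:ℝ) ^ ((1:ℝ)/3) * (27 + 3 * s) ^ ((2:ℝ)/3) - 6 * x ^ ((1:ℝ)/3)| ≤ 120 := by
      rw [abs_sub_le_iff]
      constructor <;> nlinarith [Real.rpow_pos_of_pos (by positivity : (0:ℝ) < 27 + 3*s) ((2:ℝ)/3)]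
    have hden_ge : 3 * x ^ ((2:ℝ)/3) ≤ x ^ ((2:ℝ)/3) * (27 + 3 * s) ^ ((1:ℝ)/3) := by
      nlinarith
    have hsqrt3 : Real.sqrt 3 ≤ 2 := by
      rw [show (2:ℝ) = Real.sqrt 4 by
        rw [show (4:ℝ) = 2^2 by norm_num, Real.sqrt_sq]; norm_num]
      exact Real.sqrt_le_sqrt (by norm_num)
    have hpi : (3:ℝ) ≤ π := Real.pi_gt_three.le
    have hCst : ((2:ℝ) ^ ((1:ℝ)/3) * Real.sqrt 3) / (12 * π) ≤ 1/9 := by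
      rw [div_le_iff₀ (by positivity)]
      nlinarith [Real.sqrt_nonneg 3]
    have hCst0 : (0:ℝ) ≤ ((2:ℝ) ^ ((1:ℝ)/3) * Real.sqrt 3) / (12 * π) := by positivity
    have hfrac : |((2:ℝ) ^ ((1:ℝ)/3) * (27 + 3 * s) ^ ((2:ℝ)/3) - 6 * x ^ ((1:ℝ)/3)) /
        (x ^ ((2:ℝ)/3) * (27 + 3 * s) ^ ((1:ℝ)/3))| ≤ 40 / x ^ ((2:ℝ)/3) := by
      rw [abs_div]
      rw [abs_of_pos (by nlinarith : (0:ℝ) < x ^ ((2:ℝ)/3) * (27 + 3 * s) ^ ((1:ℝ)/3))]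
      calc |((2:ℝ) ^ ((1:ℝ)/3) * (27 + 3 * s) ^ ((2:ℝ)/3) - 6 * x ^ ((1:ℝ)/3))| /
            (x ^ ((2:ℝ)/3) * (27 + 3 * s) ^ ((1:ℝ)/3))
          ≤ 120 / (3 * x ^ ((2:ℝ)/3)) := by
            apply div_le_div₀ (by norm_num) hnum (by positivity) hden_ge
        _ = 40 / x ^ ((2:ℝ)/3) := by field_simp; ring
    have hxneg : x ^ (-(2:ℝ)/3) = (x ^ ((2:ℝ)/3))⁻¹ := by
      rw [show -(2:ℝ)/3 = -((2:ℝ)/3) by norm_num, Real.rpow_neg hx0.le]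
    rw [Real.norm_eq_abs, abs_mul]
    rw [abs_of_nonneg hCst0]
    calc ((2:ℝ) ^ ((1:ℝ)/3) * Real.sqrt 3) / (12 * π) *
          |((2:ℝ) ^ ((1:ℝ)/3) * (27 + 3 * s) ^ ((2:ℝ)/3) - 6 * x ^ ((1:ℝ)/3)) /
            (x ^ ((2:ℝ)/3) * (27 + 3 * s) ^ ((1:ℝ)/3))|
        ≤ (1/9) * (40 / x ^ ((2:ℝ)/3)) := by
          apply mul_le_mul hCst hfrac (abs_nonneg _) (by norm_num)
      _ ≤ 5 * x ^ (-(2:ℝ)/3) := by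
          rw [hxneg,
            show (1/9:ℝ) * (40 / x ^ ((2:ℝ)/3)) = (40/9) * (x ^ ((2:ℝ)/3))⁻¹ from by
              rw [div_eq_mul_inv]; ring]
          exact mul_le_mul_of_nonneg_right (by norm_num) (inv_nonneg.mpr hx23_pos.le)


/-- The Fuss–Catalan density of order 2 integrates to 1 over `(0, 27/4)`. -/
theorem fussCatalan2_integrates_to_one :
    ∫ x in Set.Ioo (0:ℝ) (27 / 4),
      ((2:ℝ) ^ ((1:ℝ)/3) * Real.sqrt 3) / (12 * π) *
        (((2:ℝ) ^ ((1:ℝ)/3) * (27 + 3 * Real.sqrt (81 - 12 * x)) ^ ((2:ℝ)/3)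
          - 6 * x ^ ((1:ℝ)/3))
          / (x ^ ((2:ℝ)/3) * (27 + 3 * Real.sqrt (81 - 12 * x)) ^ ((1:ℝ)/3))) = 1 := by
  rw [← MeasureTheory.integral_Ioc_eq_integral_Ioo]
  rw [← intervalIntegral.integral_of_le (by norm_num : (0:ℝ) ≤ 27/4)]
  rw [intervalIntegral.integral_eq_sub_of_hasDerivAt_of_tendsto (f := fcPhi)
    (by norm_num : (0:ℝ) < 27/4)
    (fun x hx => fcPhi_hasDerivAt hx) fc_integrable fcPhi_tendsto_zero fcPhi_tendsto_one]
  norm_num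
end

section
/- The moment generating function F_k(z) = Σ_{p≥0} τ(w_k^p) z^p with τ(w_k^p) given by the moments of the Kesten measure μ_k satisfies F_k(z) = 2(k−1)/(k−2 + k√(1−4(k−1)z)); in particular, the power series expansion of 2(k−1)/(k−2 + k√(1−4(k−1)z)) around z = 0 has coefficients equal to ∫₀^{4(k−1)} x^p dμ_k(x) where dμ_k(x) = (k/(2π))·√(4(k−1)x − x²)/(k²x − x²) dx. -/
open Real MeasureTheory Set Filter Topology

section aux

lemma integral_Ioi_inv_quad {α β : ℝ} (hα : 0 < α) (hβ : 0 < β) :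
    ∫ u in Set.Ioi (0:ℝ), (α * u ^ 2 + β)⁻¹ = π / (2 * Real.sqrt (α * β)) := by
  set c := Real.sqrt (α / β) with hcdef
  have hc : 0 < c := Real.sqrt_pos.2 (div_pos hα hβ)
  have hab : 0 < Real.sqrt (α * β) := Real.sqrt_pos.2 (mul_pos hα hβ)
  have hc2 : c ^ 2 = α / β := Real.sq_sqrt (div_pos hα hβ).le
  have hcb : c * β = Real.sqrt (α * β) := by
    have : (c * β) ^ 2 = α * β := by rw [mul_pow, hc2]; field_simp
    rw [← this, Real.sqrt_sq (by positivity)]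
  have key : ∀ u : ℝ, HasDerivAt (fun u => (Real.sqrt (α * β))⁻¹ * Real.arctan (c * u))
      ((α * u ^ 2 + β)⁻¹) u := by
    intro u
    have h1 : HasDerivAt (fun u : ℝ => Real.arctan (c * u)) (1 / (1 + (c * u) ^ 2) * (c * 1)) u :=
      (Real.hasDerivAt_arctan (c * u)).comp u ((hasDerivAt_id u).const_mul c)
    have h2 := h1.const_mul ((Real.sqrt (α * β))⁻¹)
    refine h2.congr_deriv ?_
    have h3 : 1 + (c * u) ^ 2 = (α * u ^ 2 + β) / β := by
      rw [mul_pow, hc2]; field_simp; ring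
    rw [h3, ← hcb]
    have hd : 0 < α * u ^ 2 + β := by positivity
    field_simp
  have hpos : ∀ u ∈ Set.Ioi (0:ℝ), 0 ≤ (α * u ^ 2 + β)⁻¹ := fun u _ => by positivity
  have htend : Tendsto (fun u => (Real.sqrt (α * β))⁻¹ * Real.arctan (c * u)) atTop
      (𝓝 ((Real.sqrt (α * β))⁻¹ * (π / 2))) := by
    refine Tendsto.const_mul _ ?_
    have h4 : Tendsto (fun u : ℝ => c * u) atTop atTop :=
      Filter.tendsto_id.const_mul_atTop hc
    exact (Real.tendsto_arctan_atTop.mono_right nhdsWithin_le_nhds).comp h4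
  have := integral_Ioi_of_hasDerivAt_of_nonneg' (g' := fun u => (α * u ^ 2 + β)⁻¹)
    (fun x _ => key x) hpos htend
  rw [this]
  rw [mul_zero, Real.arctan_zero, mul_zero, sub_zero]
  rw [inv_mul_eq_div, div_eq_div_iff hab.ne' (by positivity)]
  ring

lemma integrableOn_Ioi_inv_quad {α β : ℝ} (hα : 0 < α) (hβ : 0 < β) :
    IntegrableOn (fun u : ℝ => (α * u ^ 2 + β)⁻¹) (Set.Ioi (0:ℝ)) := by
  set c := Real.sqrt (α / β) with hcdef
  have hc : 0 < c := Real.sqrt_pos.2 (div_pos hα hβ)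
  have hab : 0 < Real.sqrt (α * β) := Real.sqrt_pos.2 (mul_pos hα hβ)
  have hc2 : c ^ 2 = α / β := Real.sq_sqrt (div_pos hα hβ).le
  have hcb : c * β = Real.sqrt (α * β) := by
    have : (c * β) ^ 2 = α * β := by rw [mul_pow, hc2]; field_simp
    rw [← this, Real.sqrt_sq (by positivity)]
  have key : ∀ u : ℝ, HasDerivAt (fun u => (Real.sqrt (α * β))⁻¹ * Real.arctan (c * u))
      ((α * u ^ 2 + β)⁻¹) u := by
    intro u
    have h1 : HasDerivAt (fun u : ℝ => Real.arctan (c * u)) (1 / (1 + (c * u) ^ 2) * (c * 1)) u :=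
      (Real.hasDerivAt_arctan (c * u)).comp u ((hasDerivAt_id u).const_mul c)
    have h2 := h1.const_mul ((Real.sqrt (α * β))⁻¹)
    refine h2.congr_deriv ?_
    have h3 : 1 + (c * u) ^ 2 = (α * u ^ 2 + β) / β := by
      rw [mul_pow, hc2]; field_simp; ring
    rw [h3, ← hcb]
    have hd : 0 < α * u ^ 2 + β := by positivity
    field_simp
  have hpos : ∀ u ∈ Set.Ioi (0:ℝ), 0 ≤ (α * u ^ 2 + β)⁻¹ := fun u _ => by positivity
  have htend : Tendsto (fun u => (Real.sqrt (α * β))⁻¹ * Real.arctan (c * u)) atTop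
      (𝓝 ((Real.sqrt (α * β))⁻¹ * (π / 2))) := by
    refine Tendsto.const_mul _ ?_
    have h4 : Tendsto (fun u : ℝ => c * u) atTop atTop :=
      Filter.tendsto_id.const_mul_atTop hc
    exact (Real.tendsto_arctan_atTop.mono_right nhdsWithin_le_nhds).comp h4
  exact integrableOn_Ioi_deriv_of_nonneg' (fun x _ => key x) hpos htend

lemma cov_arctan (G : ℝ → ℝ) :
    ∫ θ in Set.Ioo (0:ℝ) π, G θ
      = ∫ u in Set.Ioi (0:ℝ), (2 / (1 + u ^ 2)) * G (2 * Real.arctan u) := by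
  have himg : (fun u : ℝ => 2 * Real.arctan u) '' Set.Ioi 0 = Set.Ioo 0 π := by
    ext y
    constructor
    · rintro ⟨u, hu, rfl⟩
      have h1 : 0 < Real.arctan u := by
        have := Real.arctan_strictMono (show (0:ℝ) < u from hu)
        simpa using this
      have h2 := Real.arctan_lt_pi_div_two u
      exact ⟨by simp only []; linarith, by simp only []; linarith⟩
    · rintro ⟨h1, h2⟩
      refine ⟨Real.tan (y / 2), Real.tan_pos_of_pos_of_lt_pi_div_two (by linarith) (by linarith),
        ?_⟩
      show 2 * Real.arctan (Real.tan (y / 2)) = y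
      rw [Real.arctan_tan (x := y / 2) (by linarith) (by linarith)]; ring
  have hderiv : ∀ u ∈ Set.Ioi (0:ℝ),
      HasDerivWithinAt (fun u : ℝ => 2 * Real.arctan u) (2 / (1 + u ^ 2)) (Set.Ioi 0) u := by
    intro u _
    have := (Real.hasDerivAt_arctan u).const_mul 2
    simpa [div_eq_mul_inv, mul_comm, mul_assoc] using this.hasDerivWithinAt
  have hinj : Set.InjOn (fun u : ℝ => 2 * Real.arctan u) (Set.Ioi 0) :=
    fun x _ y _ h => Real.arctan_injective (by
      have : (2:ℝ) * Real.arctan x = 2 * Real.arctan y := h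
      linarith [this])
  rw [← himg, MeasureTheory.integral_image_eq_integral_abs_deriv_smul measurableSet_Ioi hderiv
    hinj G]
  refine setIntegral_congr_fun measurableSet_Ioi fun u hu => ?_
  have : |2 / (1 + u ^ 2)| = 2 / (1 + u ^ 2) := abs_of_pos (by positivity)
  simp [this, smul_eq_mul]

lemma cov_cos {a : ℝ} (ha : 0 < a) (F : ℝ → ℝ) :
    ∫ x in Set.Ioo (0:ℝ) (4 * a), F x
      = ∫ θ in Set.Ioo (0:ℝ) π, (2 * a * Real.sin θ) * F (2 * a * (1 - Real.cos θ)) := by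
  have himg : (fun θ : ℝ => 2 * a * (1 - Real.cos θ)) '' Set.Ioo 0 π = Set.Ioo 0 (4 * a) := by
    ext y
    constructor
    · rintro ⟨θ, ⟨h0, hπ⟩, rfl⟩
      have h1 : Real.cos θ < 1 := by
        have := Real.cos_lt_cos_of_nonneg_of_le_pi le_rfl hπ.le h0
        simpa using this
      have h2 : -1 < Real.cos θ := by
        have := Real.cos_lt_cos_of_nonneg_of_le_pi h0.le le_rfl hπ
        simpa using this
      constructor
      · show (0:ℝ) < 2 * a * (1 - Real.cos θ); nlinarith
      · show 2 * a * (1 - Real.cos θ) < 4 * a; nlinarith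
    · rintro ⟨h1, h2⟩
      have hb1 : -1 < 1 - y / (2 * a) := by
        rw [neg_lt, neg_sub]
        calc y / (2 * a) - 1 < 2 - 1 := by
              have : y / (2 * a) < 2 := by rw [div_lt_iff₀ (by positivity)]; linarith
              linarith
          _ = 1 := by norm_num
      have hb2 : 1 - y / (2 * a) < 1 := by
        have : 0 < y / (2 * a) := div_pos h1 (by positivity)
        linarith
      refine ⟨Real.arccos (1 - y / (2 * a)), ⟨Real.arccos_pos.2 hb2, ?_⟩, ?_⟩
      · have h3 := (Real.neg_pi_div_two_lt_arcsin (x := 1 - y / (2 * a))).2 hb1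
        rw [Real.arccos]; linarith
      · show 2 * a * (1 - Real.cos (Real.arccos (1 - y / (2 * a)))) = y
        rw [Real.cos_arccos hb1.le hb2.le]
        field_simp; ring
  have hderiv : ∀ θ ∈ Set.Ioo (0:ℝ) π,
      HasDerivWithinAt (fun θ : ℝ => 2 * a * (1 - Real.cos θ)) (2 * a * Real.sin θ)
        (Set.Ioo 0 π) θ := by
    intro θ _
    have : HasDerivAt (fun θ : ℝ => 2 * a * (1 - Real.cos θ)) (2 * a * Real.sin θ) θ := by
      have h := ((hasDerivAt_const θ (1:ℝ)).sub (Real.hasDerivAt_cos θ)).const_mul (2 * a)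
      simpa using h
    exact this.hasDerivWithinAt
  have hinj : Set.InjOn (fun θ : ℝ => 2 * a * (1 - Real.cos θ)) (Set.Ioo 0 π) := by
    intro x hx y hy h
    have hcos : Real.cos x = Real.cos y := by
      have : 2 * a * (1 - Real.cos x) = 2 * a * (1 - Real.cos y) := h
      have h2a : (2 * a) ≠ 0 := by positivity
      field_simp at this
      nlinarith [this]
    exact Real.injOn_cos ⟨hx.1.le, hx.2.le⟩ ⟨hy.1.le, hy.2.le⟩ hcos
  rw [← himg, MeasureTheory.integral_image_eq_integral_abs_deriv_smul measurableSet_Ioo hderiv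
    hinj F]
  refine setIntegral_congr_fun measurableSet_Ioo fun θ hθ => ?_
  have hs : 0 < Real.sin θ := Real.sin_pos_of_pos_of_lt_pi hθ.1 hθ.2
  have : |2 * a * Real.sin θ| = 2 * a * Real.sin θ := abs_of_pos (by positivity)
  simp [this, smul_eq_mul]


end aux

set_option maxHeartbeats 1000000 in
/-- The moment generating function of the Kesten measure `μ_k` equals
`2(k-1)/(k-2 + k√(1-4(k-1)z))`: on a neighbourhood of `0`, the power series
whose coefficients are the moments `∫ x^p dμ_k(x)` sums to this function. -/
theorem kesten_moment_generating_function (k : ℕ) (hk : 2 ≤ k) :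
    ∃ r : ℝ, 0 < r ∧ ∀ z : ℝ, |z| < r →
      2 * ((k:ℝ) - 1) / ((k:ℝ) - 2 + k * Real.sqrt (1 - 4 * ((k:ℝ) - 1) * z))
        = ∑' p : ℕ,
            (∫ x in Set.Ioo (0:ℝ) (4 * ((k:ℝ) - 1)),
              x ^ p * (((k:ℝ) / (2 * π)) * Real.sqrt (4 * ((k:ℝ) - 1) * x - x ^ 2)
                / ((k:ℝ) ^ 2 * x - x ^ 2))) * z ^ p := by
  have hk2 : (2:ℝ) ≤ (k:ℝ) := by exact_mod_cast hk
  set a : ℝ := (k:ℝ) - 1 with ha_def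
  have ha1 : 1 ≤ a := by simp only [ha_def]; linarith
  have ha0 : 0 < a := by linarith
  have hkpos : (0:ℝ) < k := by linarith
  refine ⟨1 / (4 * a * (k:ℝ) ^ 2), by positivity, fun z hz => ?_⟩
  -- basic size facts
  have hz1 : 4 * a * (k:ℝ) ^ 2 * |z| < 1 := by
    rw [lt_div_iff₀ (by positivity)] at hz
    ring_nf at hz ⊢
    linarith
  have hk21 : (1:ℝ) ≤ (k:ℝ)^2 := by nlinarith
  have hq : 4 * a * |z| < 1 := by nlinarith [abs_nonneg z]
  have hq0 : (0:ℝ) ≤ 4 * a * |z| := by positivity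
  have haz : |z| * a ≤ 4 * a * |z| := by nlinarith [abs_nonneg z]
  set γ : ℝ := 1 - 4 * a * z with hγ_def
  have hγ0 : 0 < γ := by
    have : 4 * a * z ≤ 4 * a * |z| := by nlinarith [le_abs_self z]
    simp only [hγ_def]; linarith
  have hE : 0 < (k:ℝ)^2 * γ - ((k:ℝ) - 2)^2 := by
    have h1 : (k:ℝ)^2 * z ≤ (k:ℝ)^2 * |z| := by nlinarith [le_abs_self z]
    have h2 : 4 * a * ((k:ℝ)^2 * |z|) < 1 := by nlinarith [abs_nonneg z]
    have : (k:ℝ)^2 * γ - ((k:ℝ)-2)^2 = 4 * a * (1 - (k:ℝ)^2 * z) := by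
      simp only [hγ_def, ha_def]; ring
    rw [this]
    nlinarith
  -- the substituted weight
  set w : ℝ → ℝ := fun θ =>
    (k * a / π) * (1 + Real.cos θ) / (((k:ℝ) - 2) ^ 2 + 2 * a * (1 + Real.cos θ)) with hw_def
  set g : ℝ → ℝ := fun θ => 2 * a * (1 - Real.cos θ) with hg_def
  -- Step B : each moment integral transforms
  have stepB : ∀ p : ℕ,
      (∫ x in Set.Ioo (0:ℝ) (4 * a),
        x ^ p * (((k:ℝ) / (2 * π)) * Real.sqrt (4 * a * x - x ^ 2)
          / ((k:ℝ) ^ 2 * x - x ^ 2)))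
      = ∫ θ in Set.Ioo (0:ℝ) π, w θ * g θ ^ p := by
    intro p
    rw [cov_cos ha0]
    refine setIntegral_congr_fun measurableSet_Ioo fun θ hθ => ?_
    obtain ⟨h0, hπ⟩ := hθ
    have hs : 0 < Real.sin θ := Real.sin_pos_of_pos_of_lt_pi h0 hπ
    have hc2 : Real.cos θ < 1 := by
      have := Real.cos_lt_cos_of_nonneg_of_le_pi le_rfl hπ.le h0
      simpa using this
    have hc1 : -1 < Real.cos θ := by
      have := Real.cos_lt_cos_of_nonneg_of_le_pi h0.le le_rfl hπ
      simpa using this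
    have hs2 : Real.sin θ ^ 2 = 1 - Real.cos θ ^ 2 := by
      have := Real.sin_sq_add_cos_sq θ; linarith
    have hD : 0 < ((k:ℝ) - 2) ^ 2 + 2 * a * (1 + Real.cos θ) := by nlinarith
    have hsqrt : Real.sqrt (4 * a * (2 * a * (1 - Real.cos θ))
        - (2 * a * (1 - Real.cos θ)) ^ 2) = 2 * a * Real.sin θ := by
      rw [show 4 * a * (2 * a * (1 - Real.cos θ)) - (2 * a * (1 - Real.cos θ)) ^ 2
          = (2 * a * Real.sin θ) ^ 2 by linear_combination (-(4*a^2)) * hs2]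
      exact Real.sqrt_sq (by positivity)
    have hden : (k:ℝ) ^ 2 * (2 * a * (1 - Real.cos θ)) - (2 * a * (1 - Real.cos θ)) ^ 2
        = (2 * a * (1 - Real.cos θ)) * (((k:ℝ) - 2) ^ 2 + 2 * a * (1 + Real.cos θ)) := by
      linear_combination (-8*a*(1 - Real.cos θ)) * ha_def
    have h1c : (0:ℝ) < 1 - Real.cos θ := by linarith
    have h1c' : (0:ℝ) < 1 + Real.cos θ := by linarith
    have hsin : (2*a*Real.sin θ) * (2*a*Real.sin θ)
        = (2*a*(1-Real.cos θ)) * (2*a*(1+Real.cos θ)) := by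
      linear_combination (4*a^2) * hs2
    have key : 2*a*Real.sin θ * ((k:ℝ)/(2*π) * (2*a*Real.sin θ)
          / (2*a*(1-Real.cos θ) * (((k:ℝ) - 2) ^ 2 + 2 * a * (1 + Real.cos θ))))
        = (k:ℝ)*a/π*(1+Real.cos θ)/(((k:ℝ) - 2) ^ 2 + 2 * a * (1 + Real.cos θ)) := by
      calc 2*a*Real.sin θ * ((k:ℝ)/(2*π) * (2*a*Real.sin θ)
          / (2*a*(1-Real.cos θ) * (((k:ℝ) - 2) ^ 2 + 2 * a * (1 + Real.cos θ))))
          = (k:ℝ)/(2*π) * ((2*a*Real.sin θ * (2*a*Real.sin θ))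
            / (2*a*(1-Real.cos θ) * (((k:ℝ) - 2) ^ 2 + 2 * a * (1 + Real.cos θ)))) := by
            ring
        _ = (k:ℝ)/(2*π) * ((2*a*(1-Real.cos θ)) * (2*a*(1+Real.cos θ))
            / (2*a*(1-Real.cos θ) * (((k:ℝ) - 2) ^ 2 + 2 * a * (1 + Real.cos θ)))) := by
            rw [hsin]
        _ = (k:ℝ)*a/π*(1+Real.cos θ)/(((k:ℝ) - 2) ^ 2 + 2 * a * (1 + Real.cos θ)) := by
            rw [div_mul_div_comm, div_eq_div_iff (by positivity) hD.ne']
            field_simp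
    simp only [hw_def, hg_def]
    rw [hsqrt, hden]
    calc 2 * a * Real.sin θ * ((2*a*(1-Real.cos θ)) ^ p * ((k:ℝ)/(2*π) * (2*a*Real.sin θ)
          / (2*a*(1-Real.cos θ) * (((k:ℝ) - 2) ^ 2 + 2 * a * (1 + Real.cos θ)))))
        = (2*a*Real.sin θ * ((k:ℝ)/(2*π) * (2*a*Real.sin θ)
          / (2*a*(1-Real.cos θ) * (((k:ℝ) - 2) ^ 2 + 2 * a * (1 + Real.cos θ)))))
          * (2*a*(1-Real.cos θ)) ^ p := by ring
      _ = (k:ℝ)*a/π*(1+Real.cos θ)/(((k:ℝ) - 2) ^ 2 + 2 * a * (1 + Real.cos θ))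
          * (2*a*(1-Real.cos θ)) ^ p := by rw [key]
  -- bound on w
  have hwbd : ∀ θ ∈ Set.Ioo (0:ℝ) π, 0 ≤ w θ ∧ w θ ≤ (k:ℝ) / (2 * π) := by
    intro θ ⟨h0, hπ⟩
    have hc1 : -1 < Real.cos θ := by
      have := Real.cos_lt_cos_of_nonneg_of_le_pi h0.le le_rfl hπ
      simpa using this
    have h1c : (0:ℝ) < 1 + Real.cos θ := by linarith
    have hD : 0 < ((k:ℝ) - 2) ^ 2 + 2 * a * (1 + Real.cos θ) := by nlinarith
    have hD2 : 2 * a * (1 + Real.cos θ) ≤ ((k:ℝ) - 2) ^ 2 + 2 * a * (1 + Real.cos θ) := by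
      nlinarith [sq_nonneg ((k:ℝ) - 2)]
    constructor
    · simp only [hw_def]
      positivity
    · simp only [hw_def]
      rw [show (k:ℝ) * a / π * (1 + Real.cos θ) / (((k:ℝ) - 2) ^ 2 + 2 * a * (1 + Real.cos θ))
          = (k:ℝ) * a * (1 + Real.cos θ) / (π * (((k:ℝ) - 2) ^ 2 + 2 * a * (1 + Real.cos θ)))
          by field_simp]
      rw [div_le_div_iff₀ (by positivity) (by positivity)]
      nlinarith [Real.pi_pos, mul_pos hkpos Real.pi_pos, mul_pos (mul_pos hkpos Real.pi_pos) h1c]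
  have hgbd : ∀ θ ∈ Set.Ioo (0:ℝ) π, 0 ≤ g θ ∧ g θ ≤ 4 * a := by
    intro θ _
    have h1 := Real.neg_one_le_cos θ
    have h2 := Real.cos_le_one θ
    constructor
    · simp only [hg_def]; nlinarith
    · simp only [hg_def]; nlinarith
  -- Step C : swap sum and integral
  have stepC : ∑' p : ℕ, (∫ θ in Set.Ioo (0:ℝ) π, w θ * g θ ^ p) * z ^ p
      = ∫ θ in Set.Ioo (0:ℝ) π, w θ * (1 - z * g θ)⁻¹ := by
    set μ := volume.restrict (Set.Ioo (0:ℝ) π) with hμ_def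
    have hfin : IsFiniteMeasure μ := by
      constructor
      rw [hμ_def, Measure.restrict_apply_univ]
      exact measure_Ioo_lt_top
    set F : ℕ → ℝ → ℝ := fun p θ => w θ * g θ ^ p * z ^ p with hF_def
    have hmeasw : Measurable w := by
      simp only [hw_def]
      exact (measurable_const.mul (measurable_const.add Real.continuous_cos.measurable)).div
        (measurable_const.add (measurable_const.mul
          (measurable_const.add Real.continuous_cos.measurable)))
    have hmeasg : Measurable g := by
      simp only [hg_def]
      exact measurable_const.mul (measurable_const.sub Real.continuous_cos.measurable)
    have hmeasF : ∀ p, Measurable (F p) := fun p =>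
      ((hmeasw.mul (hmeasg.pow_const p)).mul measurable_const)
    have hbd : ∀ p : ℕ, ∀ θ ∈ Set.Ioo (0:ℝ) π,
        ‖F p θ‖ ≤ (k:ℝ) / (2 * π) * (4 * a * |z|) ^ p := by
      intro p θ hθ
      obtain ⟨hw0, hw1⟩ := hwbd θ hθ
      obtain ⟨hg0, hg1⟩ := hgbd θ hθ
      have : ‖F p θ‖ = w θ * g θ ^ p * |z| ^ p := by
        simp only [hF_def, norm_mul, norm_pow, Real.norm_eq_abs, abs_of_nonneg hw0,
          abs_of_nonneg hg0]
      rw [this, show (4 * a * |z|) ^ p = (4*a)^p * |z|^p from mul_pow _ _ p]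
      have h1 : g θ ^ p ≤ (4*a)^p := pow_le_pow_left₀ hg0 hg1 p
      have h2 : w θ * g θ ^ p ≤ ((k:ℝ)/(2*π)) * (4*a)^p := by
        apply mul_le_mul hw1 h1 (by positivity) (by positivity)
      have h3 : (0:ℝ) ≤ |z| ^ p := by positivity
      calc w θ * g θ ^ p * |z| ^ p ≤ ((k:ℝ)/(2*π)) * (4*a)^p * |z|^p := by nlinarith
        _ = (k:ℝ)/(2*π) * ((4*a)^p * |z|^p) := by ring
    have hint : ∀ p : ℕ, Integrable (F p) μ := by
      intro p
      refine Integrable.mono' (integrable_const ((k:ℝ) / (2 * π) * (4 * a * |z|) ^ p))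
        (hmeasF p).aestronglyMeasurable ?_
      rw [hμ_def, ae_restrict_iff' measurableSet_Ioo]
      exact ae_of_all _ (hbd p)
    have hsum : Summable fun p : ℕ => ∫ θ, ‖F p θ‖ ∂μ := by
      apply Summable.of_nonneg_of_le (fun p => integral_nonneg fun θ => norm_nonneg _)
        (fun p => ?_)
        (((summable_geometric_of_lt_one hq0 hq).mul_left (π * ((k:ℝ) / (2 * π)))))
      calc ∫ θ, ‖F p θ‖ ∂μ
          ≤ ∫ _, (k:ℝ) / (2 * π) * (4 * a * |z|) ^ p ∂μ := by
            refine integral_mono_ae (hint p).norm (integrable_const _) ?_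
            have hmem : ∀ᵐ θ ∂μ, θ ∈ Set.Ioo (0:ℝ) π := by
              rw [hμ_def]
              exact ae_restrict_mem measurableSet_Ioo
            filter_upwards [hmem] with θ h2 using hbd p θ h2
        _ = π * ((k:ℝ) / (2 * π)) * (4 * a * |z|) ^ p := by
            rw [integral_const, hμ_def, Measure.real, Measure.restrict_apply_univ, Real.volume_Ioo,
              smul_eq_mul, ENNReal.toReal_ofReal (by simp [Real.pi_nonneg] : (0:ℝ) ≤ π - 0)]
            ring
    have hswap := (hasSum_integral_of_summable_integral_norm hint hsum).tsum_eq
    have hlhs : ∀ p : ℕ, ∫ θ, F p θ ∂μ = (∫ θ in Set.Ioo (0:ℝ) π, w θ * g θ ^ p) * z ^ p := by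
      intro p
      rw [hμ_def, hF_def]
      exact integral_mul_const _ _
    calc ∑' p : ℕ, (∫ θ in Set.Ioo (0:ℝ) π, w θ * g θ ^ p) * z ^ p
        = ∑' p : ℕ, ∫ θ, F p θ ∂μ := by
          congr 1; funext p; rw [hlhs p]
      _ = ∫ θ, (∑' p : ℕ, F p θ) ∂μ := hswap
      _ = ∫ θ in Set.Ioo (0:ℝ) π, w θ * (1 - z * g θ)⁻¹ := by
          rw [hμ_def]
          refine setIntegral_congr_fun measurableSet_Ioo fun θ hθ => ?_
          obtain ⟨hg0, hg1⟩ := hgbd θ hθ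
          have habs : ‖g θ * z‖ < 1 := by
            rw [Real.norm_eq_abs, abs_mul, abs_of_nonneg hg0]
            calc g θ * |z| ≤ 4 * a * |z| := by nlinarith [abs_nonneg z]
              _ < 1 := hq
          calc ∑' p : ℕ, F p θ = ∑' p : ℕ, w θ * (g θ * z) ^ p := by
                congr 1; funext p; simp only [hF_def, mul_pow]; ring
            _ = w θ * (1 - g θ * z)⁻¹ := by
                rw [tsum_mul_left, tsum_geometric_of_norm_lt_one habs]
            _ = w θ * (1 - z * g θ)⁻¹ := by rw [mul_comm (g θ) z]
  -- Step D : arctan substitution and rational simplification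
  have stepD : ∫ θ in Set.Ioo (0:ℝ) π, w θ * (1 - z * g θ)⁻¹
      = ∫ u in Set.Ioi (0:ℝ),
          (4 * (k:ℝ) * a / π) * ((((k:ℝ)-2)^2 * u^2 + (k:ℝ)^2) * (γ * u^2 + 1))⁻¹ := by
    rw [cov_arctan (fun θ => w θ * (1 - z * g θ)⁻¹)]
    refine setIntegral_congr_fun measurableSet_Ioi fun u _ => ?_
    have h1u : (0:ℝ) < 1 + u ^ 2 := by positivity
    have hcos : Real.cos (2 * Real.arctan u) = 2 / (1 + u ^ 2) - 1 := by
      rw [Real.cos_two_mul, Real.cos_sq_arctan]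
      ring
    have h1 : 1 + Real.cos (2 * Real.arctan u) = 2 / (1 + u ^ 2) := by rw [hcos]; ring
    have h2 : 1 - Real.cos (2 * Real.arctan u) = 2 * u ^ 2 / (1 + u ^ 2) := by
      rw [hcos]; field_simp; ring
    have hD1 : (0:ℝ) < ((k:ℝ) - 2) ^ 2 + 2 * a * (2 / (1 + u ^ 2)) := by positivity
    have hD3 : (0:ℝ) < γ * u ^ 2 + 1 := by positivity
    have hD4 : (0:ℝ) < ((k:ℝ) - 2) ^ 2 * u ^ 2 + (k:ℝ) ^ 2 := by positivity
    have hD2eq : 1 - z * (2 * a * (2 * u ^ 2 / (1 + u ^ 2))) = (γ * u ^ 2 + 1) / (1 + u ^ 2) := by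
      simp only [hγ_def]
      field_simp
      ring
    have hD2 : (0:ℝ) < 1 - z * (2 * a * (2 * u ^ 2 / (1 + u ^ 2))) := by
      rw [hD2eq]; positivity
    show (2 / (1 + u ^ 2)) * (w (2 * Real.arctan u) * (1 - z * g (2 * Real.arctan u))⁻¹) = _
    simp only [hw_def, hg_def]
    rw [h1, h2, hD2eq]
    have hka : ((k:ℝ) - 2) ^ 2 + 4 * a = (k:ℝ) ^ 2 := by
      simp only [ha_def]; ring
    rw [show ((k:ℝ) - 2) ^ 2 + 2 * a * (2 / (1 + u ^ 2))
        = (((k:ℝ) - 2) ^ 2 * u ^ 2 + (k:ℝ) ^ 2) / (1 + u ^ 2) by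
      rw [eq_div_iff h1u.ne']
      calc (((k:ℝ) - 2) ^ 2 + 2 * a * (2 / (1 + u ^ 2))) * (1 + u ^ 2)
          = ((k:ℝ) - 2) ^ 2 * (1 + u ^ 2) + 4 * a * ((1 + u ^ 2) / (1 + u ^ 2)) := by ring
        _ = ((k:ℝ) - 2) ^ 2 * (1 + u ^ 2) + 4 * a := by rw [div_self h1u.ne', mul_one]
        _ = ((k:ℝ) - 2) ^ 2 * u ^ 2 + (k:ℝ) ^ 2 := by linear_combination hka]
    rw [inv_div]
    field_simp
    ring
  -- Step E : evaluate
  have stepE : ∫ u in Set.Ioi (0:ℝ),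
      (4 * (k:ℝ) * a / π) * ((((k:ℝ)-2)^2 * u^2 + (k:ℝ)^2) * (γ * u^2 + 1))⁻¹
      = 2 * a / ((k:ℝ) - 2 + k * Real.sqrt γ) := by
    have hγ1 : (0:ℝ) < γ * 1 := by linarith
    set s := Real.sqrt γ with hs_def
    have hs0 : 0 < s := Real.sqrt_pos.2 hγ0
    have hs2 : s ^ 2 = γ := Real.sq_sqrt hγ0.le
    rcases eq_or_lt_of_le hk2 with hkk | hkk
    · -- k = 2
      have hkk : (k:ℝ) = 2 := hkk.symm
      rw [hkk]
      have e1 : (2:ℝ) - 2 + 2 * s = 2 * s := by ring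
      rw [e1]
      have e2 : ∀ u : ℝ, ((((2:ℝ)-2)^2 * u^2 + (2:ℝ)^2) * (γ * u^2 + 1))⁻¹
          = (4:ℝ)⁻¹ * (γ * u^2 + 1)⁻¹ := by
        intro u
        rw [show (((2:ℝ)-2)^2 * u^2 + (2:ℝ)^2) = 4 by norm_num, mul_inv]
      simp only [e2]
      calc ∫ u in Set.Ioi (0:ℝ), 4 * 2 * a / π * ((4:ℝ)⁻¹ * (γ * u^2 + 1)⁻¹)
          = ∫ u in Set.Ioi (0:ℝ), (2 * a / π) * (γ * u^2 + 1)⁻¹ := by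
            refine setIntegral_congr_fun measurableSet_Ioi fun u _ => ?_
            have hγu : (0:ℝ) < γ * u ^ 2 + 1 := by positivity
            field_simp
        _ = (2 * a / π) * (π / (2 * Real.sqrt (γ * 1))) := by
            rw [integral_const_mul, integral_Ioi_inv_quad hγ0 one_pos]
        _ = 2 * a / (2 * s) := by
            rw [mul_one, ← hs_def]
            field_simp
    · -- k > 2
      have hα : (0:ℝ) < ((k:ℝ)-2)^2 := by nlinarith
      have hβ : (0:ℝ) < (k:ℝ)^2 := by positivity
      have hEne : ((k:ℝ)^2 * γ - ((k:ℝ)-2)^2) ≠ 0 := hE.ne'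
      have hse : 0 < (k:ℝ) * s - ((k:ℝ) - 2) := by
        have hfac : ((k:ℝ) * s - ((k:ℝ)-2)) * ((k:ℝ) * s + ((k:ℝ)-2))
            = (k:ℝ)^2 * γ - ((k:ℝ)-2)^2 := by
          linear_combination (k:ℝ)^2 * hs2
        have hplus : 0 < (k:ℝ) * s + ((k:ℝ)-2) := by nlinarith
        nlinarith
      have hden : 0 < (k:ℝ) - 2 + (k:ℝ) * s := by nlinarith
      set C₁ : ℝ := (4 * (k:ℝ) * a / π) * γ / ((k:ℝ)^2 * γ - ((k:ℝ)-2)^2) with hC1_def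
      set C₂ : ℝ := -((4 * (k:ℝ) * a / π) * (((k:ℝ)-2)^2) / ((k:ℝ)^2 * γ - ((k:ℝ)-2)^2))
        with hC2_def
      have hint1 : IntegrableOn (fun u : ℝ => C₁ * (γ * u^2 + 1)⁻¹) (Set.Ioi (0:ℝ)) :=
        (integrableOn_Ioi_inv_quad hγ0 one_pos).const_mul C₁
      have hint2 : IntegrableOn (fun u : ℝ => C₂ * (((k:ℝ)-2)^2 * u^2 + (k:ℝ)^2)⁻¹)
          (Set.Ioi (0:ℝ)) := (integrableOn_Ioi_inv_quad hα hβ).const_mul C₂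
      calc ∫ u in Set.Ioi (0:ℝ),
            (4 * (k:ℝ) * a / π) * ((((k:ℝ)-2)^2 * u^2 + (k:ℝ)^2) * (γ * u^2 + 1))⁻¹
          = ∫ u in Set.Ioi (0:ℝ),
            (C₁ * (γ * u^2 + 1)⁻¹ + C₂ * (((k:ℝ)-2)^2 * u^2 + (k:ℝ)^2)⁻¹) := by
            refine setIntegral_congr_fun measurableSet_Ioi fun u _ => ?_
            have hγu : (0:ℝ) < γ * u ^ 2 + 1 := by positivity
            have hαu : (0:ℝ) < ((k:ℝ)-2)^2 * u^2 + (k:ℝ)^2 := by positivity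
            rw [hC1_def, hC2_def]
            field_simp
            ring
          _ = C₁ * (∫ u in Set.Ioi (0:ℝ), (γ * u^2 + 1)⁻¹)
              + C₂ * (∫ u in Set.Ioi (0:ℝ), (((k:ℝ)-2)^2 * u^2 + (k:ℝ)^2)⁻¹) := by
            rw [integral_add hint1 hint2, integral_const_mul, integral_const_mul]
          _ = C₁ * (π / (2 * Real.sqrt (γ * 1)))
              + C₂ * (π / (2 * Real.sqrt (((k:ℝ)-2)^2 * (k:ℝ)^2))) := by
            rw [integral_Ioi_inv_quad hγ0 one_pos, integral_Ioi_inv_quad hα hβ]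
          _ = 2 * a / ((k:ℝ) - 2 + (k:ℝ) * s) := by
            rw [mul_one, ← hs_def]
            rw [show (((k:ℝ)-2)^2 * (k:ℝ)^2) = (((k:ℝ)-2) * k)^2 by ring,
              Real.sqrt_sq (by nlinarith : (0:ℝ) ≤ ((k:ℝ)-2) * k)]
            have hk2ne : ((k:ℝ) - 2) ≠ 0 := by nlinarith
            have hE' : (k:ℝ)^2 * s^2 - ((k:ℝ)-2)^2 ≠ 0 := by rw [hs2]; exact hEne
            rw [hC1_def, hC2_def, ← hs2]
            field_simp
            ring

  calc 2 * a / ((k:ℝ) - 2 + k * Real.sqrt (1 - 4 * a * z))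
      = ∫ u in Set.Ioi (0:ℝ),
          (4 * (k:ℝ) * a / π) * ((((k:ℝ)-2)^2 * u^2 + (k:ℝ)^2) * (γ * u^2 + 1))⁻¹ := by
        rw [stepE, hγ_def]
    _ = ∫ θ in Set.Ioo (0:ℝ) π, w θ * (1 - z * g θ)⁻¹ := stepD.symm
    _ = ∑' p : ℕ, (∫ θ in Set.Ioo (0:ℝ) π, w θ * g θ ^ p) * z ^ p := stepC.symm
    _ = _ := by
        congr 1; funext p; rw [stepB p]
end

section
/- The second moment of the Bures asymptotic density P_B on [0, 3√3] equals 5/2, where P_B(x) = (1/(4π√3))·[ (a/x + √((a/x)² − 1))^{2/3} − (a/x − √((a/x)² − 1))^{2/3} ] with a = 3√3. -/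
set_option maxHeartbeats 1000000
open Real MeasureTheory

noncomputable def H0 : ℝ → ℝ := fun y =>
  (-5*y - y^5 + 32*y^7 - 32*y^11 + y^13 + 5*y^17) / (324*(1+y^6)^3)
  + (5/486) * Real.arctan y
  + (5/972) * (Real.arctan (2*y - Real.sqrt 3) + Real.arctan (2*y + Real.sqrt 3))

lemma H0_hasDeriv (y : ℝ) :
    HasDerivAt H0 (y^6*(1-y^4)*(1-y^6)/(1+y^6)^4) y := by
  have h6 : (0:ℝ) < 1 + y^6 := by positivity
  have hr : Real.sqrt 3 ^ 2 = 3 := Real.sq_sqrt (by norm_num)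
  set r := Real.sqrt 3 with hrdef
  have hA : (0:ℝ) < 1 + (2*y - r)^2 := by positivity
  have hB : (0:ℝ) < 1 + (2*y + r)^2 := by positivity
  have hq : (0:ℝ) < y^4 - y^2 + 1 := by nlinarith [sq_nonneg (y^2 - 1/2)]
  -- numerator derivative
  have hnum : HasDerivAt (fun t:ℝ => -5*t - t^5 + 32*t^7 - 32*t^11 + t^13 + 5*t^17)
      (-5 - 5*y^4 + 224*y^6 - 352*y^10 + 13*y^12 + 85*y^16) y := by
    have h := (((((hasDerivAt_id' y).const_mul (-5:ℝ)).sub (hasDerivAt_pow 5 y)).add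
        ((hasDerivAt_pow 7 y).const_mul (32:ℝ))).sub
        ((hasDerivAt_pow 11 y).const_mul (32:ℝ))).add
        ((hasDerivAt_pow 13 y).add ((hasDerivAt_pow 17 y).const_mul (5:ℝ)))
    convert h using 1
    all_goals try with_reducible_and_instances rfl
    all_goals first | rfl | (funext t; simp only [Pi.add_apply, Pi.sub_apply]; ring) | (push_cast; ring)
  have hden : HasDerivAt (fun t:ℝ => 324*(1+t^6)^3)
      (324*(3*(1+y^6)^2*(6*y^5))) y := by
    have h := (((hasDerivAt_pow 6 y).const_add 1).pow 3).const_mul (324:ℝ)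
    convert h using 1
    all_goals try with_reducible_and_instances rfl
    all_goals first | rfl | (push_cast; ring)
  have hrat := hnum.div hden (by positivity)
  have harc1 := (Real.hasDerivAt_arctan y).const_mul ((5:ℝ)/486)
  have harc2 : HasDerivAt (fun t:ℝ => Real.arctan (2*t - r)) (2/(1+(2*y-r)^2)) y := by
    have hin : HasDerivAt (fun t:ℝ => 2*t - r) 2 y := by
      simpa using ((hasDerivAt_id' y).const_mul (2:ℝ)).sub_const r
    have := (Real.hasDerivAt_arctan (2*y - r)).comp y hin
    convert this using 1
    all_goals try rfl
    ring
  have harc3 : HasDerivAt (fun t:ℝ => Real.arctan (2*t + r)) (2/(1+(2*y+r)^2)) y := by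
    have hin : HasDerivAt (fun t:ℝ => 2*t + r) 2 y := by
      simpa using ((hasDerivAt_id' y).const_mul (2:ℝ)).add_const r
    have := (Real.hasDerivAt_arctan (2*y + r)).comp y hin
    convert this using 1
    all_goals try rfl
    ring
  have harcsum := (harc2.add harc3).const_mul ((5:ℝ)/972)
  have htotal := (hrat.add harc1).add harcsum
  have hkey : 2/(1+(2*y-r)^2) + 2/(1+(2*y+r)^2) = (y^2+1)/(y^4-y^2+1) := by
    rw [div_add_div _ _ hA.ne' hB.ne', div_eq_div_iff (mul_pos hA hB).ne' hq.ne']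
    linear_combination (-(y^2+1)*r^2 + 12*y^4 - y^2 - 1) * hr
  convert htotal using 1
  all_goals try rfl
  rw [mul_add ((5:ℝ)/972), ← mul_add ((5:ℝ)/972)]
  rw [hkey]
  have h2 : (0:ℝ) < 1 + y^2 := by positivity
  have hq' : y ^ 2 * (y ^ 2 - 1) + 1 ≠ 0 := by nlinarith
  field_simp
  ring

noncomputable def sB (x : ℝ) : ℝ := Real.sqrt ((3*Real.sqrt 3)^2 - x^2)
noncomputable def wB (x : ℝ) : ℝ := (x/(3*Real.sqrt 3 + sB x)) ^ ((1:ℝ)/3)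
noncomputable def FB (x : ℝ) : ℝ := (486/π) * H0 (wB x)
noncomputable def gB (x : ℝ) : ℝ :=
  (1/(4*π*Real.sqrt 3)) * ((wB x)^4*(3*Real.sqrt 3 + sB x)^2 - x^2*(wB x)^2)

lemma FB_deriv {x : ℝ} (hx0 : 0 < x) (hxa : x < 3*Real.sqrt 3) :
    HasDerivAt FB (gB x) x := by
  have hrpos : (0:ℝ) < Real.sqrt 3 := Real.sqrt_pos.2 (by norm_num)
  have hr : Real.sqrt 3 ^ 2 = 3 := Real.sq_sqrt (by norm_num)
  set r := Real.sqrt 3 with hrdef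
  have hpos : 0 < (3*r)^2 - x^2 := by nlinarith
  have hs0 : 0 < sB x := Real.sqrt_pos.2 hpos
  have hs2 : (sB x)^2 = (3*r)^2 - x^2 := Real.sq_sqrt hpos.le
  set s := sB x with hsdef
  have hden : (0:ℝ) < 3*r + s := by positivity
  have hv : 0 < x/(3*r + s) := div_pos hx0 hden
  have hw0 : 0 < wB x := Real.rpow_pos_of_pos hv (1/3)
  have hw3 : (wB x)^3 = x/(3*r + s) := by
    rw [wB, ← Real.rpow_natCast (_ ^ ((1:ℝ)/3)) 3, ← Real.rpow_mul hv.le]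
    norm_num
  set w := wB x with hwdef
  -- derivative chain
  have hsd : HasDerivAt sB (-(2*x)/(2*s)) x := by
    have hin : HasDerivAt (fun t:ℝ => (3*r)^2 - t^2) (-(2*x)) x := by
      have := (hasDerivAt_pow 2 x).const_sub ((3*r)^2)
      convert this using 1
      all_goals try with_reducible_and_instances rfl
      all_goals push_cast; ring
    have := hin.sqrt (by positivity)
    exact this
  have hvd : HasDerivAt (fun t => t/(3*r + sB t))
      ((1*(3*r+s) - x*(-(2*x)/(2*s)))/(3*r+s)^2) x := by
    exact (hasDerivAt_id' x).div ((hsd.const_add (3*r))) (ne_of_gt hden)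
  have hwd : HasDerivAt (fun t => (t/(3*r + sB t)) ^ ((1:ℝ)/3))
      (((1*(3*r+s) - x*(-(2*x)/(2*s)))/(3*r+s)^2) * ((1:ℝ)/3) * (x/(3*r+s)) ^ ((1:ℝ)/3 - 1)) x := by
    exact hvd.rpow_const (Or.inl (ne_of_gt hv))
  have hHd := (H0_hasDeriv w).comp x hwd
  have hfin := hHd.const_mul ((486:ℝ)/π)
  -- identities
  have hvpow : (x/(3*r+s)) ^ ((1:ℝ)/3 - 1) = 1/w^2 := by
    have hw2 : w^2 = (x/(3*r+s)) ^ ((2:ℝ)/3) := by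
      rw [hwdef, wB, ← Real.rpow_natCast (_ ^ ((1:ℝ)/3)) 2, ← Real.rpow_mul hv.le]
      norm_num
    rw [show ((1:ℝ)/3 - 1) = -(2/3) by norm_num, Real.rpow_neg hv.le, hw2, one_div]
  have hx3 : x = w^3*(3*r+s) := by
    rw [hw3]; field_simp
  have hws : w^6*(3*r+s) = 3*r - s := by
    have h6 : w^6 = (x/(3*r+s))^2 := by rw [← hw3]; ring
    rw [h6]
    field_simp
    linear_combination hs2
  have hw6 : w^6 < 1 := by nlinarith
  have h1w : (0:ℝ) < 1 + w^6 := by positivity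
  have hsw : s = 3*r*(1-w^6)/(1+w^6) := by
    field_simp
    linear_combination hws
  have hxw : x = 6*r*w^3/(1+w^6) := by
    rw [hx3, hsw]; field_simp; ring
  have hπ : π ≠ 0 := Real.pi_ne_zero
  have h1w6 : (1:ℝ) - w^6 ≠ 0 := by nlinarith
  have hw2ne : w ≠ 0 := ne_of_gt hw0
  have h1wne : (1:ℝ)+w^6 ≠ 0 := ne_of_gt h1w
  have hrne : r ≠ 0 := ne_of_gt hrpos
  have h3rs : 3*r + s = 6*r/(1+w^6) := by
    rw [hsw]; field_simp; ring
  have hnum' : 1*(3*r+s) - x*(-(2*x)/(2*s)) = 3*r*(3*r+s)/s := by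
    field_simp
    linear_combination hs2
  have hvd' : (1 * (3 * r + s) - x * (-(2 * x) / (2 * s))) / (3 * r + s) ^ 2
      = 3*r/(s*(3*r+s)) := by
    rw [hnum']; field_simp
  have hsne : s ≠ 0 := ne_of_gt hs0
  have hgB : gB x = (9*r/π) * (w^4*(1-w^4)/(1+w^6)^2) := by
    simp only [gB, ← hwdef, ← hsdef, ← hrdef]
    rw [hxw, h3rs]
    field_simp
    ring
  have hA : (486/π) *
      (w ^ 6 * (1 - w ^ 4) * (1 - w ^ 6) / (1 + w ^ 6) ^ 4 *
        (3*r/(s*(3*r+s)) * (1/3) * (1/w^2)))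
      = (27/(π*r)) * (w^4*(1-w^4)/(1+w^6)^2) := by
    rw [h3rs, hsw]
    field_simp
    ring
  have h27 : (27:ℝ)/(π*r) = 9*r/π := by
    rw [div_eq_div_iff (by positivity) (by positivity)]
    linear_combination -9*π*hr
  have hval : (486/π) *
      (w ^ 6 * (1 - w ^ 4) * (1 - w ^ 6) / (1 + w ^ 6) ^ 4 *
        ((1 * (3 * r + s) - x * (-(2 * x) / (2 * s))) / (3 * r + s) ^ 2 * (1 / 3) *
          (x / (3 * r + s)) ^ ((1:ℝ) / 3 - 1))) = gB x := by
    rw [hvpow, hvd']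
    rw [hgB, ← h27]
    exact hA
  rw [← hval]
  exact hfin

lemma sB_continuous : Continuous sB := by
  unfold sB
  exact Real.continuous_sqrt.comp (by continuity)

lemma sB_nonneg (x : ℝ) : 0 ≤ sB x := Real.sqrt_nonneg _

lemma denB_pos (x : ℝ) : 0 < 3*Real.sqrt 3 + sB x := by
  have h1 : (0:ℝ) < Real.sqrt 3 := Real.sqrt_pos.2 (by norm_num)
  have h2 := sB_nonneg x
  linarith

lemma wB_continuous : Continuous wB := by
  unfold wB
  refine Continuous.rpow_const ?_ (fun x => Or.inr (by norm_num))
  exact continuous_id.div (continuous_const.add sB_continuous) (fun x => ne_of_gt (denB_pos x))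

lemma H0_continuous : Continuous H0 :=
  continuous_iff_continuousAt.2 fun y => (H0_hasDeriv y).continuousAt

lemma FB_continuous : Continuous FB := by
  unfold FB
  exact continuous_const.mul (H0_continuous.comp wB_continuous)

lemma gB_continuous : Continuous gB := by
  unfold gB
  apply continuous_const.mul
  apply Continuous.sub
  · exact (wB_continuous.pow 4).mul ((continuous_const.add sB_continuous).pow 2)
  · exact (continuous_id.pow 2).mul (wB_continuous.pow 2)

lemma wB_zero : wB 0 = 0 := by
  unfold wB
  rw [zero_div, Real.zero_rpow (by norm_num)]

lemma wB_top : wB (3*Real.sqrt 3) = 1 := by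
  have h1 : (0:ℝ) < Real.sqrt 3 := Real.sqrt_pos.2 (by norm_num)
  unfold wB sB
  rw [sub_self, Real.sqrt_zero, add_zero, div_self (by positivity), Real.one_rpow]

lemma H0_zero : H0 0 = 0 := by
  have : (2:ℝ)*0 - Real.sqrt 3 = -(Real.sqrt 3) := by ring
  rw [H0]
  rw [this]
  rw [Real.arctan_neg]
  norm_num

lemma H0_one : H0 1 = 5*π/972 := by
  have h1 : (0:ℝ) < Real.sqrt 3 := Real.sqrt_pos.2 (by norm_num)
  have hr : Real.sqrt 3 ^ 2 = 3 := Real.sq_sqrt (by norm_num)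
  have hmul : (2 - Real.sqrt 3) * (2 + Real.sqrt 3) = 1 := by linear_combination -hr
  have hinv : ((2:ℝ) + Real.sqrt 3)⁻¹ = 2 - Real.sqrt 3 :=
    (eq_inv_of_mul_eq_one_left hmul).symm
  rw [H0]
  norm_num [Real.arctan_one]
  rw [← hinv, Real.arctan_inv_of_pos (by positivity)]
  ring

lemma integrand_eq {x : ℝ} (hx0 : 0 < x) (hxa : x < 3*Real.sqrt 3) :
    x ^ 2 * ((1 / (4 * π * Real.sqrt 3)) *
        (((3 * Real.sqrt 3) / x
            + Real.sqrt (((3 * Real.sqrt 3) / x) ^ 2 - 1)) ^ ((2:ℝ)/3)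
          - ((3 * Real.sqrt 3) / x
            - Real.sqrt (((3 * Real.sqrt 3) / x) ^ 2 - 1)) ^ ((2:ℝ)/3))) = gB x := by
  have h1 : (0:ℝ) < Real.sqrt 3 := Real.sqrt_pos.2 (by norm_num)
  have hpos : 0 < (3*Real.sqrt 3)^2 - x^2 := by nlinarith
  have hs0 : 0 < sB x := Real.sqrt_pos.2 hpos
  have hs2 : (sB x)^2 = (3*Real.sqrt 3)^2 - x^2 := Real.sq_sqrt hpos.le
  set s := sB x with hsdef
  have hden : 0 < 3*Real.sqrt 3 + s := denB_pos x
  have hv : 0 < x/(3*Real.sqrt 3 + s) := div_pos hx0 hden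
  have hw0 : 0 < wB x := Real.rpow_pos_of_pos hv _
  have hw3 : (wB x)^3 = x/(3*Real.sqrt 3 + s) := by
    rw [wB, ← Real.rpow_natCast (_ ^ ((1:ℝ)/3)) 3, ← Real.rpow_mul hv.le]
    norm_num
  have hw2 : (wB x)^2 = (x/(3*Real.sqrt 3 + s)) ^ ((2:ℝ)/3) := by
    rw [wB, ← Real.rpow_natCast (_ ^ ((1:ℝ)/3)) 2, ← Real.rpow_mul hv.le]
    norm_num
  set w := wB x with hwdef
  have hsqrt : Real.sqrt (((3*Real.sqrt 3)/x)^2 - 1) = s/x := by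
    have e1 : ((3*Real.sqrt 3)/x)^2 - 1 = ((3*Real.sqrt 3)^2 - x^2)/x^2 := by
      field_simp
    rw [e1, Real.sqrt_div (by positivity) (x^2), Real.sqrt_sq hx0.le]
    rfl
  have hplus : (3*Real.sqrt 3)/x + s/x = (3*Real.sqrt 3 + s)/x := by rw [← add_div]
  have hminus : (3*Real.sqrt 3)/x - s/x = x/(3*Real.sqrt 3 + s) := by
    rw [div_sub_div_same, div_eq_div_iff (ne_of_gt hx0) (ne_of_gt hden)]
    linear_combination -hs2
  have hP : ((3*Real.sqrt 3 + s)/x) ^ ((2:ℝ)/3) = (w^2)⁻¹ := by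
    rw [show (3*Real.sqrt 3 + s)/x = (x/(3*Real.sqrt 3 + s))⁻¹ by rw [inv_div],
      Real.inv_rpow hv.le, ← hw2]
  have hx3 : x = w^3*(3*Real.sqrt 3 + s) := by rw [hw3]; field_simp
  rw [hsqrt, hplus, hminus, hP, ← hw2]
  simp only [gB, ← hwdef, ← hsdef]
  have hkey : x^2*(w^2)⁻¹ = w^4*(3*Real.sqrt 3 + s)^2 := by
    rw [hx3]; field_simp
  linear_combination (1/(4*π*Real.sqrt 3)) * hkey

/-- The second moment of the Bures asymptotic density on `(0, 3√3)` equals `5/2`. -/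
theorem bures_second_moment :
    ∫ x in Set.Ioo (0:ℝ) (3 * Real.sqrt 3),
      x ^ 2 * ((1 / (4 * π * Real.sqrt 3)) *
        (((3 * Real.sqrt 3) / x
            + Real.sqrt (((3 * Real.sqrt 3) / x) ^ 2 - 1)) ^ ((2:ℝ)/3)
          - ((3 * Real.sqrt 3) / x
            - Real.sqrt (((3 * Real.sqrt 3) / x) ^ 2 - 1)) ^ ((2:ℝ)/3))) = 5 / 2 := by
  have h1 : (0:ℝ) < Real.sqrt 3 := Real.sqrt_pos.2 (by norm_num)
  have ha : (0:ℝ) < 3 * Real.sqrt 3 := by positivity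
  have h₁ : (∫ x in Set.Ioo (0:ℝ) (3 * Real.sqrt 3),
      x ^ 2 * ((1 / (4 * π * Real.sqrt 3)) *
        (((3 * Real.sqrt 3) / x
            + Real.sqrt (((3 * Real.sqrt 3) / x) ^ 2 - 1)) ^ ((2:ℝ)/3)
          - ((3 * Real.sqrt 3) / x
            - Real.sqrt (((3 * Real.sqrt 3) / x) ^ 2 - 1)) ^ ((2:ℝ)/3))))
      = ∫ x in Set.Ioo (0:ℝ) (3 * Real.sqrt 3), gB x :=
    MeasureTheory.setIntegral_congr_fun measurableSet_Ioo
      (fun x hx => integrand_eq hx.1 hx.2)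
  rw [h₁, ← MeasureTheory.integral_Ioc_eq_integral_Ioo,
    ← intervalIntegral.integral_of_le ha.le,
    intervalIntegral.integral_eq_sub_of_hasDeriv_right_of_le ha.le
      FB_continuous.continuousOn
      (fun x hx => (FB_deriv hx.1 hx.2).hasDerivWithinAt)
      (gB_continuous.intervalIntegrable _ _)]
  rw [FB, FB, wB_top, wB_zero, H0_one, H0_zero]
  have hπ : π ≠ 0 := Real.pi_ne_zero
  field_simp
  ring
end
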